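/- arXiv:1601.06249 — 5 statements merged into one kernel-verified Lean document; each statement's English description precedes it below -/
import Mathlib

section
/- Let a, b be positive integers and let λ = (λ₁ ≥ λ₂ ≥ ... ≥ λ_b) be a partition with b nonnegative parts, each part at most a. Let λ' denote the conjugate partition of λ viewed inside the b × a rectangle (so λ' has a nonnegative parts, each at most b). Writing δ_n for the sequence (0, 1, ..., n−1), the multiset of entries of the concatenation of (λ + δ_b) with δ_a equals the multiset of entries of the concatenation of (λ' + δ_a) with δ_b, where addition of sequences is coordinatewise. -/
open Finset

private lemma split_ge (n v : ℕ) (f : ℕ → ℕ) :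
    ((Finset.range n).filter (fun i => v ≤ f i)).card
      = ((Finset.range n).filter (fun i => v + 1 ≤ f i)).card
        + ((Finset.range n).filter (fun i => v = f i)).card := by
  rw [← Finset.card_union_of_disjoint]
  · congr 1
    ext x
    simp only [Finset.mem_union, Finset.mem_filter, Finset.mem_range]
    omega
  · rw [Finset.disjoint_left]
    intro x hx hy
    simp only [Finset.mem_filter, Finset.mem_range] at hx hy
    omega

private lemma key_aux (a b v : ℕ) (l : ℕ → ℕ)
    (hmono : ∀ i j, 1 ≤ i → i ≤ j → j ≤ b → l j ≤ l i)
    (hbound : ∀ i, 1 ≤ i → i ≤ b → l i ≤ a) :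
    ((Finset.range b).filter (fun i => v ≤ l (i + 1) + i)).card
      + ((Finset.range a).filter (fun j => v ≤ j)).card
    = ((Finset.range a).filter
        (fun j => v ≤ ((Finset.Icc 1 b).filter (fun i => j + 1 ≤ l i)).card + j)).card
      + ((Finset.range b).filter (fun i => v ≤ i)).card := by
  -- split N(v) = B(v) + S(v)
  have hN : (Finset.range b).filter (fun i => v ≤ l (i + 1) + i)
      = (Finset.range b).filter (fun i => v ≤ i)
        ∪ (Finset.range b).filter (fun i => i < v ∧ v ≤ l (i + 1) + i) := by
    ext x
    simp only [Finset.mem_union, Finset.mem_filter, Finset.mem_range]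
    omega
  have hNd : Disjoint ((Finset.range b).filter (fun i => v ≤ i))
      ((Finset.range b).filter (fun i => i < v ∧ v ≤ l (i + 1) + i)) := by
    rw [Finset.disjoint_left]
    intro x hx hy
    simp only [Finset.mem_filter, Finset.mem_range] at hx hy
    omega
  have hM : (Finset.range a).filter
        (fun j => v ≤ ((Finset.Icc 1 b).filter (fun i => j + 1 ≤ l i)).card + j)
      = (Finset.range a).filter (fun j => v ≤ j)
        ∪ (Finset.range a).filter
            (fun j => j < v ∧ v ≤ ((Finset.Icc 1 b).filter (fun i => j + 1 ≤ l i)).card + j) := by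
    ext x
    simp only [Finset.mem_union, Finset.mem_filter, Finset.mem_range]
    omega
  have hMd : Disjoint ((Finset.range a).filter (fun j => v ≤ j))
      ((Finset.range a).filter
        (fun j => j < v ∧ v ≤ ((Finset.Icc 1 b).filter (fun i => j + 1 ≤ l i)).card + j)) := by
    rw [Finset.disjoint_left]
    intro x hx hy
    simp only [Finset.mem_filter, Finset.mem_range] at hx hy
    omega
  rw [hN, hM, Finset.card_union_of_disjoint hNd, Finset.card_union_of_disjoint hMd]
  -- it remains to show S(v) = T(v) via the bijection i ↦ v - 1 - i
  have hST : ((Finset.range b).filter (fun i => i < v ∧ v ≤ l (i + 1) + i)).card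
      = ((Finset.range a).filter
          (fun j => j < v ∧ v ≤ ((Finset.Icc 1 b).filter (fun i => j + 1 ≤ l i)).card + j)).card := by
    apply Finset.card_bij (fun i _ => v - 1 - i)
    · intro i hi
      simp only [Finset.mem_filter, Finset.mem_range] at hi ⊢
      obtain ⟨hib, hiv, hlv⟩ := hi
      have hla : l (i + 1) ≤ a := hbound (i + 1) (by omega) (by omega)
      have hcard : i + 1 ≤ ((Finset.Icc 1 b).filter (fun k => (v - 1 - i) + 1 ≤ l k)).card := by
        have hsub : Finset.Icc 1 (i + 1)
            ⊆ (Finset.Icc 1 b).filter (fun k => (v - 1 - i) + 1 ≤ l k) := by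
          intro k hk
          simp only [Finset.mem_Icc] at hk
          simp only [Finset.mem_filter, Finset.mem_Icc]
          have hk2 : l (i + 1) ≤ l k := hmono k (i + 1) hk.1 hk.2 (by omega)
          exact ⟨⟨hk.1, by omega⟩, by omega⟩
        calc i + 1 = (Finset.Icc 1 (i + 1)).card := by simp
          _ ≤ _ := Finset.card_le_card hsub
      refine ⟨?_, ?_, ?_⟩ <;> omega
    · intro i1 h1 i2 h2 heq
      simp only [Finset.mem_filter, Finset.mem_range] at h1 h2
      omega
    · intro j hj
      simp only [Finset.mem_filter, Finset.mem_range] at hj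
      obtain ⟨hja, hjv, hjc⟩ := hj
      have hex : ∃ k ∈ (Finset.Icc 1 b).filter (fun k => j + 1 ≤ l k), v - j ≤ k := by
        by_contra h
        push_neg at h
        have hsub : (Finset.Icc 1 b).filter (fun k => j + 1 ≤ l k)
            ⊆ Finset.Icc 1 (v - j - 1) := by
          intro k hk
          have hk' := h k hk
          simp only [Finset.mem_filter, Finset.mem_Icc] at hk ⊢
          omega
        have hle := Finset.card_le_card hsub
        simp only [Nat.card_Icc] at hle
        omega
      obtain ⟨k, hk, hik⟩ := hex
      simp only [Finset.mem_filter, Finset.mem_Icc] at hk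
      refine ⟨v - 1 - j, ?_, by omega⟩
      simp only [Finset.mem_filter, Finset.mem_range]
      have hkk : l k ≤ l (v - 1 - j + 1) :=
        hmono (v - 1 - j + 1) k (by omega) (by omega) hk.1.2
      refine ⟨by omega, by omega, by omega⟩
  omega

/-- Lemma on partitions.
`l` (1-indexed) is a partition with `b` nonnegative parts, each at most `a`.
The conjugate in the `b × a` rectangle has `j`-th part `#{i ∈ [1,b] : l i ≥ j}`.
The multiset of entries of `(λ + δ_b) ∪ δ_a` equals that of `(λ' + δ_a) ∪ δ_b`. -/
theorem stmt_0 (a b : ℕ) (ha : 0 < a) (hb : 0 < b) (l : ℕ → ℕ)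
    (hmono : ∀ i j, 1 ≤ i → i ≤ j → j ≤ b → l j ≤ l i)
    (hbound : ∀ i, 1 ≤ i → i ≤ b → l i ≤ a) :
    ((Finset.range b).val.map (fun i => l (i + 1) + i))
      + ((Finset.range a).val.map (fun j => j))
    = ((Finset.range a).val.map
        (fun j => ((Finset.Icc 1 b).filter (fun i => j + 1 ≤ l i)).card + j))
      + ((Finset.range b).val.map (fun i => i)) := by
  ext v
  have hcount : ∀ (n : ℕ) (f : ℕ → ℕ),
      Multiset.count v (Multiset.map f (Finset.range n).val)
        = ((Finset.range n).filter (fun i => v = f i)).card := by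
    intro n f
    rw [Multiset.count_map]
    rfl
  rw [Multiset.count_add, Multiset.count_add, hcount, hcount, hcount, hcount]
  have k1 := key_aux a b v l hmono hbound
  have k2 := key_aux a b (v + 1) l hmono hbound
  have s1 := split_ge b v (fun i => l (i + 1) + i)
  have s2 := split_ge a v (fun j => j)
  have s3 := split_ge a v (fun j => ((Finset.Icc 1 b).filter (fun i => j + 1 ≤ l i)).card + j)
  have s4 := split_ge b v (fun i => i)
  omega
end

section
/- The number of parking functions on n cars is (n+1)^{n-1}, and the number of preference functions on n cars is n^n. -/
open Finset

section Parking

variable (n : ℕ)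

private def cnt (g : Fin n → ZMod (n+1)) (j : ℕ) : ℕ :=
  (univ.filter fun i => g i = (j : ZMod (n+1))).card

private def Fv (g : Fin n → ZMod (n+1)) (t : ℕ) : ℤ :=
  (∑ j ∈ range t, cnt n g j : ℤ) - t

private def Pk (g : Fin n → ZMod (n+1)) (s : ZMod (n+1)) : Prop :=
  ∀ m : ℕ, 1 ≤ m → m ≤ n → m ≤ (univ.filter fun i => (g i - s).val < m).card

variable {n}

private lemma cnt_add (g : Fin n → ZMod (n+1)) (j : ℕ) :
    cnt n g (j + (n+1)) = cnt n g j := by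
  have h : ((j + (n+1) : ℕ) : ZMod (n+1)) = (j : ZMod (n+1)) := by
    push_cast; simp
  simp only [cnt, h]

private lemma sum_cnt_range (g : Fin n → ZMod (n+1)) :
    ∑ j ∈ range (n+1), cnt n g j = n := by
  have h1 : (Finset.univ : Finset (Fin n)).card
      = ∑ z : ZMod (n+1), (univ.filter fun i => g i = z).card :=
    Finset.card_eq_sum_card_fiberwise (fun x _ => mem_univ _)
  have h2 : ∑ j ∈ range (n+1), cnt n g j
      = ∑ z : ZMod (n+1), (univ.filter fun i => g i = z).card := by
    refine Finset.sum_nbij' (i := fun j => (j : ZMod (n+1))) (j := fun z => z.val)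
      ?_ ?_ ?_ ?_ ?_
    · intro a ha; exact mem_univ _
    · intro z hz; simpa using (ZMod.val_lt z)
    · intro a ha
      exact ZMod.val_natCast_of_lt (mem_range.mp ha)
    · intro z hz
      simp [ZMod.natCast_val, ZMod.cast_id]
    · intro a ha; rfl
  rw [h2, ← h1, card_univ, Fintype.card_fin]


private lemma sum_cnt_Ico (g : Fin n → ZMod (n+1)) (t : ℕ) :
    ∑ j ∈ Finset.Ico t (t + (n+1)), cnt n g j = n := by
  induction t with
  | zero => simpa using sum_cnt_range g
  | succ t ih =>
    have h1 : ∑ j ∈ Finset.Ico t (t + 1 + (n+1)), cnt n g j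
        = cnt n g t + ∑ j ∈ Finset.Ico (t+1) (t + 1 + (n+1)), cnt n g j := by
      rw [Finset.sum_eq_sum_Ico_succ_bot (by omega)]
    have h2 : ∑ j ∈ Finset.Ico t (t + 1 + (n+1)), cnt n g j
        = (∑ j ∈ Finset.Ico t (t + (n+1)), cnt n g j) + cnt n g (t + (n+1)) := by
      have : t + 1 + (n+1) = (t + (n+1)) + 1 := by omega
      rw [this, Finset.sum_Ico_succ_top (by omega)]
    rw [cnt_add] at h2
    omega

private lemma Fv_period (g : Fin n → ZMod (n+1)) (t : ℕ) :
    Fv n g (t + (n+1)) = Fv n g t - 1 := by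
  have h : ∑ j ∈ range (t + (n+1)), cnt n g j
      = (∑ j ∈ range t, cnt n g j) + ∑ j ∈ Finset.Ico t (t + (n+1)), cnt n g j := by
    rw [← Finset.sum_range_add_sum_Ico _ (by omega : t ≤ t + (n+1))]
  have h' : (∑ j ∈ range (t + (n+1)), (cnt n g j : ℤ))
      = (∑ j ∈ range t, (cnt n g j : ℤ)) + n := by
    rw [sum_cnt_Ico] at h
    exact_mod_cast congrArg (Nat.cast : ℕ → ℤ) h
  rw [Fv, Fv, h']
  push_cast
  ring

private lemma arc_count (g : Fin n → ZMod (n+1)) (s m : ℕ) (hm : m ≤ n) :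
    (univ.filter fun i => (g i - (s : ZMod (n+1))).val < m).card
      = ∑ v ∈ range m, cnt n g (s + v) := by
  have h1 : (univ.filter fun i => (g i - (s : ZMod (n+1))).val < m).card
      = ∑ v ∈ range m, ((univ.filter fun i => (g i - (s : ZMod (n+1))).val < m).filter
          fun i => (g i - (s : ZMod (n+1))).val = v).card := by
    refine Finset.card_eq_sum_card_fiberwise ?_
    intro i hi
    simp only [mem_coe, mem_filter, mem_univ, true_and] at hi
    simpa using hi
  rw [h1]
  refine Finset.sum_congr rfl ?_
  intro v hv
  have hv' : v < m := mem_range.mp hv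
  have key : ∀ i : Fin n, ((g i - (s : ZMod (n+1))).val < m ∧ (g i - (s : ZMod (n+1))).val = v)
      ↔ g i = ((s + v : ℕ) : ZMod (n+1)) := by
    intro i
    constructor
    · rintro ⟨-, h⟩
      have : ((g i - (s : ZMod (n+1))).val : ZMod (n+1)) = (v : ZMod (n+1)) := by rw [h]
      rw [ZMod.natCast_val, ZMod.cast_id] at this
      push_cast
      rw [← this]
      ring
    · intro h
      have : g i - (s : ZMod (n+1)) = (v : ZMod (n+1)) := by
        rw [h]; push_cast; ring
      have hval : (g i - (s : ZMod (n+1))).val = v := by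
        rw [this, ZMod.val_natCast_of_lt (by omega)]
      exact ⟨by omega, hval⟩
  rw [Finset.filter_filter, cnt]
  congr 1
  apply Finset.filter_congr
  intro i _
  simpa using key i


private lemma Fv_add (g : Fin n → ZMod (n+1)) (a m : ℕ) :
    Fv n g (a + m) = Fv n g a + (∑ v ∈ range m, (cnt n g (a + v) : ℤ)) - m := by
  have h : ∑ j ∈ range (a + m), (cnt n g j : ℤ)
      = (∑ j ∈ range a, (cnt n g j : ℤ)) + ∑ j ∈ Finset.Ico a (a + m), (cnt n g j : ℤ) := by
    rw [← Finset.sum_range_add_sum_Ico _ (by omega : a ≤ a + m)]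
  have h2 : ∑ j ∈ Finset.Ico a (a + m), (cnt n g j : ℤ)
      = ∑ v ∈ range m, (cnt n g (a + v) : ℤ) := by
    rw [Finset.sum_Ico_eq_sum_range]
    simp
  rw [Fv, Fv, h, h2]
  push_cast
  ring

private lemma pk_iff_fv (g : Fin n → ZMod (n+1)) (a : ℕ) (ha : a < n + 1) :
    Pk n g (a : ZMod (n+1)) ↔ (∀ m : ℕ, 1 ≤ m → m ≤ n → Fv n g a ≤ Fv n g (a + m)) := by
  have hval : ((a : ZMod (n+1))).val = a := ZMod.val_natCast_of_lt ha
  unfold Pk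
  refine forall_congr' fun m => ?_
  refine imp_congr_right fun h1 => imp_congr_right fun h2 => ?_
  rw [arc_count g a m h2, Fv_add g a m]
  constructor
  · intro h
    have : (m : ℤ) ≤ (∑ v ∈ range m, (cnt n g (a + v) : ℤ)) := by
      calc (m : ℤ) ≤ ((∑ v ∈ range m, cnt n g (a + v) : ℕ) : ℤ) := by exact_mod_cast h
        _ = _ := by push_cast; rfl
    linarith
  · intro h
    have : (m : ℤ) ≤ ((∑ v ∈ range m, cnt n g (a + v) : ℕ) : ℤ) := by
      push_cast
      linarith
    exact_mod_cast this

private lemma exists_pk (g : Fin n → ZMod (n+1)) : ∃ s : ZMod (n+1), Pk n g s := by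
  classical
  obtain ⟨t₁, ht₁, hmin⟩ := Finset.exists_min_image (range (n+1)) (Fv n g)
    ⟨0, by simp⟩
  have hmin' : ∀ t < n + 1, Fv n g t₁ ≤ Fv n g t := fun t ht => hmin t (mem_range.mpr ht)
  have hex : ∃ t, t < n + 1 ∧ Fv n g t ≤ Fv n g t₁ := ⟨t₁, mem_range.mp ht₁, le_refl _⟩
  obtain ⟨ht₀lt, ht₀le⟩ := Nat.find_spec hex
  set t₀ := Nat.find hex with ht₀def
  have hstrict : ∀ t < t₀, Fv n g t₁ < Fv n g t := by
    intro t ht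
    have h := Nat.find_min hex ht
    push_neg at h
    exact h (by omega)
  refine ⟨(t₀ : ZMod (n+1)), (pk_iff_fv g t₀ ht₀lt).mpr ?_⟩
  intro m h1 h2
  by_cases hcase : t₀ + m < n + 1
  · exact le_trans ht₀le (hmin' _ hcase)
  · have hu : t₀ + m - (n+1) < t₀ := by omega
    have heq : t₀ + m = (t₀ + m - (n+1)) + (n+1) := by omega
    rw [heq, Fv_period]
    have := hstrict _ hu
    linarith

private lemma pk_unique_aux (g : Fin n → ZMod (n+1)) {a b : ℕ} (hab : a < b) (hb : b < n + 1)
    (ha1 : ∀ m : ℕ, 1 ≤ m → m ≤ n → Fv n g a ≤ Fv n g (a + m))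
    (hb1 : ∀ m : ℕ, 1 ≤ m → m ≤ n → Fv n g b ≤ Fv n g (b + m)) : False := by
  have h1 : Fv n g a ≤ Fv n g b := by
    have := ha1 (b - a) (by omega) (by omega)
    rwa [show a + (b - a) = b by omega] at this
  have h2 : Fv n g b ≤ Fv n g (a + (n+1)) := by
    have := hb1 (a + (n+1) - b) (by omega) (by omega)
    rwa [show b + (a + (n+1) - b) = a + (n+1) by omega] at this
  rw [Fv_period] at h2
  linarith

private lemma existsUnique_pk (g : Fin n → ZMod (n+1)) : ∃! s : ZMod (n+1), Pk n g s := by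
  obtain ⟨s, hs⟩ := exists_pk g
  refine ⟨s, hs, ?_⟩
  intro s' hs'
  by_contra hne
  have hv : s'.val ≠ s.val := fun h => hne (by
    have := congrArg (fun x : ℕ => (x : ZMod (n+1))) h
    simpa [ZMod.natCast_val, ZMod.cast_id] using this)
  have hs2 : Pk n g ((s.val : ℕ) : ZMod (n+1)) := by
    rwa [ZMod.natCast_val, ZMod.cast_id]
  have hs'2 : Pk n g ((s'.val : ℕ) : ZMod (n+1)) := by
    rwa [ZMod.natCast_val, ZMod.cast_id]
  have hF := (pk_iff_fv g s.val (ZMod.val_lt s)).mp hs2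
  have hF' := (pk_iff_fv g s'.val (ZMod.val_lt s')).mp hs'2
  rcases lt_or_gt_of_ne hv with h | h
  · exact pk_unique_aux g h (ZMod.val_lt s) hF' hF
  · exact pk_unique_aux g h (ZMod.val_lt s') hF hF'

private lemma pk_shift (g : Fin n → ZMod (n+1)) (c s : ZMod (n+1)) :
    Pk n (fun i => g i + c) (s + c) ↔ Pk n g s := by
  simp [Pk, add_sub_add_right_eq_sub]


private lemma park_iff_pk (f : Fin n → Fin n) :
    (∀ k : Fin n, (k : ℕ) + 1 ≤ (Finset.univ.filter (fun i => f i ≤ k)).card)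
      ↔ Pk n (fun i => ((f i : ℕ) : ZMod (n+1))) 0 := by
  have hv : ∀ i : Fin n, ((((f i : ℕ) : ZMod (n+1))) - 0).val = (f i : ℕ) := by
    intro i
    rw [sub_zero, ZMod.val_natCast_of_lt (by omega : (f i : ℕ) < n + 1)]
  constructor
  · intro h m h1 h2
    have hk := h ⟨m - 1, by omega⟩
    simp only at hk
    have hfilter : (univ.filter fun i => ((((f i : ℕ) : ZMod (n+1))) - 0).val < m)
        = univ.filter fun i => f i ≤ (⟨m - 1, by omega⟩ : Fin n) := by
      apply Finset.filter_congr
      intro i _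
      rw [hv i]
      simp [Fin.le_def]
      omega
    rw [hfilter]
    omega
  · intro h k
    have hm := h ((k : ℕ) + 1) (by omega) (by omega)
    have hfilter : (univ.filter fun i => ((((f i : ℕ) : ZMod (n+1))) - 0).val < (k : ℕ) + 1)
        = univ.filter fun i => f i ≤ k := by
      apply Finset.filter_congr
      intro i _
      rw [hv i]
      rw [Fin.le_def]
      omega
    rw [hfilter] at hm
    exact hm

end Parking


/-- There are `(n+1)^(n-1)` parking functions and `n^n` preference
functions on `n` cars. Here `f : Fin n → Fin n` encodes a preference function
(`f i = j` means car `i+1` prefers spot `j+1`), and the parking condition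
`|f⁻¹([k])| ≥ k` reads: for every `k : Fin n`, at least `k+1` cars prefer a spot `≤ k+1`. -/
theorem stmt_6 (n : ℕ) (hn : 1 ≤ n) :
    Nat.card {f : Fin n → Fin n // ∀ k : Fin n,
        (k : ℕ) + 1 ≤ (Finset.univ.filter (fun i => f i ≤ k)).card}
      = (n + 1) ^ (n - 1)
    ∧ Nat.card (Fin n → Fin n) = n ^ n := by
  classical
  constructor
  · let PF := {f : Fin n → Fin n // ∀ k : Fin n,
        (k : ℕ) + 1 ≤ (Finset.univ.filter (fun i => f i ≤ k)).card}
    let Φ : ZMod (n+1) × PF → (Fin n → ZMod (n+1)) :=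
      fun p i => ((p.2.1 i : ℕ) : ZMod (n+1)) + p.1
    have hpk : ∀ (c : ZMod (n+1)) (f : PF), Pk n (Φ (c, f)) c := by
      intro c f
      have h0 := (park_iff_pk f.1).mp f.2
      have h2 := (pk_shift (fun i => ((f.1 i : ℕ) : ZMod (n+1))) c 0).mpr h0
      simpa [Φ] using h2
    have hinj : Function.Injective Φ := by
      rintro ⟨c, f⟩ ⟨c', f'⟩ h
      obtain ⟨s, hs, huniq⟩ := existsUnique_pk (Φ (c, f))
      have hc : c = c' := by
        have h1 := huniq c (hpk c f)
        have h2 := huniq c' (by rw [h]; exact hpk c' f')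
        rw [h1, h2]
      subst hc
      have hf : f = f' := by
        apply Subtype.ext
        funext i
        have hfi := congrFun h i
        simp only [Φ] at hfi
        have h3 : ((f.1 i : ℕ) : ZMod (n+1)) = ((f'.1 i : ℕ) : ZMod (n+1)) :=
          add_right_cancel hfi
        have h4 := congrArg ZMod.val h3
        rw [ZMod.val_natCast_of_lt (by omega), ZMod.val_natCast_of_lt (by omega)] at h4
        exact Fin.ext h4
      rw [hf]
    have hsurj : Function.Surjective Φ := by
      intro g
      obtain ⟨s, hs, -⟩ := existsUnique_pk g
      have hgs : Pk n (fun i => g i - s) 0 := by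
        refine (pk_shift (fun i => g i - s) s 0).mp ?_
        have heq : (fun i => (g i - s) + s) = g := by funext i; ring
        rw [zero_add, heq]
        exact hs
      have hall : ∀ i : Fin n, (g i - s).val < n := by
        intro i
        have hcard := hgs n hn le_rfl
        by_contra hcon
        push_neg at hcon
        have hsub : (univ.filter fun j => ((fun i => g i - s) j - 0).val < n)
            ⊆ univ.erase i := by
          intro j hj
          simp only [mem_filter, mem_univ, true_and, sub_zero] at hj
          refine Finset.mem_erase.mpr ⟨?_, mem_univ _⟩
          intro hji; subst hji; omega
        have := Finset.card_le_card hsub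
        rw [Finset.card_erase_of_mem (mem_univ _), card_univ, Fintype.card_fin] at this
        omega
      refine ⟨⟨s, ⟨fun i => ⟨(g i - s).val, hall i⟩, ?_⟩⟩, ?_⟩
      · refine (park_iff_pk _).mpr ?_
        have heq : (fun i => (((⟨(g i - s).val, hall i⟩ : Fin n) : ℕ) : ZMod (n+1)))
            = fun i => g i - s := by
          funext i
          simp [ZMod.natCast_val, ZMod.cast_id]
        rw [heq]
        exact hgs
      · funext i
        show (((g i - s).val : ℕ) : ZMod (n+1)) + s = g i
        rw [ZMod.natCast_val, ZMod.cast_id]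
        ring
    have hcard := Nat.card_eq_of_bijective Φ ⟨hinj, hsurj⟩
    rw [Nat.card_prod] at hcard
    have h1 : Nat.card (ZMod (n+1)) = n + 1 := by
      simp [Nat.card_eq_fintype_card, ZMod.card]
    have h2 : Nat.card (Fin n → ZMod (n+1)) = (n+1)^n := by
      simp [Nat.card_eq_fintype_card, Fintype.card_fun, ZMod.card]
    rw [h1, h2] at hcard
    have h3 : (n+1)^n = (n+1) * (n+1)^(n-1) := by
      rw [← pow_succ']
      congr 1
      omega
    rw [h3] at hcard
    exact Nat.eq_of_mul_eq_mul_left (by omega) hcard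
  · simp [Nat.card_eq_fintype_card]
end

section
/- Let τ ∈ S_n be a permutation with increasing runs of lengths ρ_r, ..., ρ_1, ρ_0 (read left to right), let (w_i) be its 0-schedule numbers and, for 1 ≤ l ≤ r, let (w^{(l)}(c)) be its l-schedule numbers. Then the multiset {w^{(l)}(c) : 1 ≤ c ≤ n} equals the multiset ({w_i : 1 ≤ i ≤ n} ∪ {ρ_l}) minus one copy of ρ_0. -/
set_option linter.unusedSectionVars false
set_option linter.unusedVariables false
/-- Positions (1-indexed, in the one-line notation of a permutation of `{1,…,n}`)
of the `(k+1)`-st-from-last increasing run, where the runs have lengths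
`ρ r, …, ρ 1, ρ 0` from left to right (so run `k = 0` is the last run). -/
def runPos (n : ℕ) (ρ : ℕ → ℕ) (k : ℕ) : Finset ℕ :=
  Finset.Icc (n + 1 - ∑ j ∈ Finset.range (k + 1), ρ j) (n - ∑ j ∈ Finset.range k, ρ j)

/-- The run index (counted from the last run, `0` = last run) of position `p`. -/
def runIdxOf (n r : ℕ) (ρ : ℕ → ℕ) (p : ℕ) : ℕ :=
  ((Finset.range (r + 1)).filter (fun m => ∑ j ∈ Finset.range (m + 1), ρ j ≤ n - p)).card

/-- The `l`-schedule number `w^{(l)}(c)` of the value `c` for a permutation whose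
one-line notation is `τ` (position `p` holds value `τ p`), with inverse `τinv`,
and run lengths `ρ r, …, ρ 0`. If `c` lies in one of the last `l` runs it is
`#(elements < c in c's run) + #(elements > c in the previous run)`; if `c` lies in
the `(l+1)`-st from last run it is the number of elements weakly to the right of `c`
in that run; otherwise it is
`#(elements > c in c's run) + #(elements < c in the next run)`. -/
def sched (n r : ℕ) (ρ τ τinv : ℕ → ℕ) (l c : ℕ) : ℕ :=
  let p := τinv c
  let k := runIdxOf n r ρ p
  if k < l then
    ((runPos n ρ k).filter (fun p' => τ p' < c)).card
      + ((runPos n ρ (k + 1)).filter (fun p' => c < τ p')).card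
  else if k = l then
    ((runPos n ρ k).filter (fun p' => p ≤ p')).card
  else
    ((runPos n ρ k).filter (fun p' => c < τ p')).card
      + ((runPos n ρ (k - 1)).filter (fun p' => τ p' < c)).card


namespace Stmt9Aux

def rk (R : Finset ℕ) (c : ℕ) : ℕ := (R.filter (· < c)).card
def crk (L : Finset ℕ) (c : ℕ) : ℕ := (L.filter (c < ·)).card
def fp (L R : Finset ℕ) (c : ℕ) : ℕ := rk R c + crk L c

lemma range_succ_val (m : ℕ) : (Finset.range (m+1)).val = 0 ::ₘ (Finset.Icc 1 m).val := by
  have h : Finset.range (m+1) = insert 0 (Finset.Icc 1 m) := by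
    ext x; simp only [Finset.mem_range, Finset.mem_Icc, Finset.mem_insert]; omega
  rw [h, Finset.insert_val_of_notMem (by simp)]

lemma range_succ_val' (m : ℕ) : (Finset.range (m+1)).val = m ::ₘ (Finset.range m).val := by
  rw [Finset.range_add_one, Finset.insert_val_of_notMem (by simp)]

lemma base_id (m : ℕ) :
    (Finset.Icc 1 m).val + ({0} : Multiset ℕ) = (Finset.range m).val + {m} := by
  have h1 := range_succ_val m
  have h2 := range_succ_val' m
  rw [← Multiset.singleton_add] at h1
  rw [← Multiset.singleton_add] at h2
  rw [add_comm ((Finset.Icc 1 m).val), add_comm ((Finset.range m).val), ← h1, ← h2]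

lemma map_val_eq_image_val (f : ℕ → ℕ) (s : Finset ℕ)
    (h : ∀ a ∈ s, ∀ b ∈ s, f a = f b → a = b) :
    Multiset.map f s.val = (s.image f).val := by
  rw [Finset.image_val, Multiset.dedup_eq_self.2 (s.nodup.map_on h)]

lemma map_add_one_Icc (a b : ℕ) :
    Multiset.map (· + 1) (Finset.Icc a b).val = (Finset.Icc (a+1) (b+1)).val := by
  rw [map_val_eq_image_val _ _ (fun x _ y _ h => by omega), Finset.image_add_right_Icc]

lemma icc_cons (a b : ℕ) (h : a ≤ b) :
    (Finset.Icc a b).val = a ::ₘ (Finset.Icc (a+1) b).val := by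
  have h1 : Finset.Icc a b = insert a (Finset.Icc (a+1) b) := by
    ext x; simp only [Finset.mem_Icc, Finset.mem_insert]; omega
  rw [h1, Finset.insert_val_of_notMem (by simp)]

lemma rk_lt_card {S : Finset ℕ} {c : ℕ} (hc : c ∈ S) : rk S c < S.card := by
  apply Finset.card_lt_card
  refine ⟨Finset.filter_subset _ _, fun h => ?_⟩
  have := h hc; simp [Finset.mem_filter] at this

lemma crk_lt_card {S : Finset ℕ} {c : ℕ} (hc : c ∈ S) : crk S c < S.card := by
  apply Finset.card_lt_card
  refine ⟨Finset.filter_subset _ _, fun h => ?_⟩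
  have := h hc; simp [Finset.mem_filter] at this

lemma rk_strictMono {S : Finset ℕ} {c d : ℕ} (hc : c ∈ S) (hcd : c < d) :
    rk S c < rk S d := by
  apply Finset.card_lt_card
  constructor
  · intro x hx
    simp only [Finset.mem_filter] at hx ⊢
    exact ⟨hx.1, by omega⟩
  · intro h
    have := h (Finset.mem_filter.2 ⟨hc, hcd⟩)
    simp [Finset.mem_filter] at this

lemma crk_strictMono {S : Finset ℕ} {c d : ℕ} (hd : d ∈ S) (hcd : c < d) :
    crk S d < crk S c := by
  apply Finset.card_lt_card
  constructor
  · intro x hx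
    simp only [Finset.mem_filter] at hx ⊢
    exact ⟨hx.1, by omega⟩
  · intro h
    have := h (Finset.mem_filter.2 ⟨hd, hcd⟩)
    simp [Finset.mem_filter] at this

lemma rank_map (S : Finset ℕ) :
    Multiset.map (rk S) S.val = (Finset.range S.card).val := by
  have hinj : ∀ c ∈ S, ∀ d ∈ S, rk S c = rk S d → c = d := by
    intro c hc d hd h
    rcases lt_trichotomy c d with h' | h' | h'
    · exact absurd h (Nat.ne_of_lt (rk_strictMono hc h'))
    · exact h'
    · exact absurd h.symm (Nat.ne_of_lt (rk_strictMono hd h'))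
  rw [map_val_eq_image_val _ _ hinj]
  congr 1
  apply Finset.eq_of_subset_of_card_le
  · intro x hx
    obtain ⟨c, hc, rfl⟩ := Finset.mem_image.1 hx
    exact Finset.mem_range.2 (rk_lt_card hc)
  · rw [Finset.card_range, Finset.card_image_of_injOn (fun a ha b hb => hinj a ha b hb)]

lemma corank_map (S : Finset ℕ) :
    Multiset.map (crk S) S.val = (Finset.range S.card).val := by
  have hinj : ∀ c ∈ S, ∀ d ∈ S, crk S c = crk S d → c = d := by
    intro c hc d hd h
    rcases lt_trichotomy c d with h' | h' | h'
    · exact absurd h.symm (Nat.ne_of_lt (crk_strictMono hd h'))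
    · exact h'
    · exact absurd h (Nat.ne_of_lt (crk_strictMono hc h'))
  rw [map_val_eq_image_val _ _ hinj]
  congr 1
  apply Finset.eq_of_subset_of_card_le
  · intro x hx
    obtain ⟨c, hc, rfl⟩ := Finset.mem_image.1 hx
    exact Finset.mem_range.2 (crk_lt_card hc)
  · rw [Finset.card_range, Finset.card_image_of_injOn (fun a ha b hb => hinj a ha b hb)]

/-- The two-run lemma. -/
lemma tworun : ∀ N : ℕ, ∀ L R : Finset ℕ, L.card + R.card ≤ N → Disjoint L R →
    Multiset.map (fp L R) R.val + (Finset.Icc 1 L.card).val + {R.card}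
      = Multiset.map (fp L R) L.val + {L.card} + (Finset.Icc 1 R.card).val := by
  intro N
  induction N with
  | zero =>
    intro L R hN _
    have hc1 : L.card = 0 := by omega
    have hc2 : R.card = 0 := by omega
    have hL : L = ∅ := Finset.card_eq_zero.1 hc1
    have hR : R = ∅ := Finset.card_eq_zero.1 hc2
    subst hL hR; simp
  | succ N ih =>
    intro L R hN hd
    rcases Finset.eq_empty_or_nonempty R with hR | hR
    · subst hR
      have hfp : ∀ c ∈ L.val, fp L ∅ c = crk L c := by
        intro c _; simp [fp, rk]
      simp only [Finset.empty_val, Multiset.map_zero, Finset.card_empty, zero_add]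
      rw [Multiset.map_congr rfl hfp, corank_map,
        show Finset.Icc 1 0 = (∅ : Finset ℕ) from Finset.Icc_eq_empty (by omega)]
      simp only [Finset.empty_val, add_zero]
      exact base_id L.card
    rcases Finset.eq_empty_or_nonempty L with hL | hL
    · subst hL
      have hfp : ∀ c ∈ R.val, fp ∅ R c = rk R c := by
        intro c _; simp [fp, crk]
      simp only [Finset.empty_val, Multiset.map_zero, Finset.card_empty, zero_add]
      rw [Multiset.map_congr rfl hfp, rank_map,
        show Finset.Icc 1 0 = (∅ : Finset ℕ) from Finset.Icc_eq_empty (by omega)]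
      simp only [Finset.empty_val, add_zero]
      rw [← base_id R.card]
      exact add_comm _ _
    · -- main inductive step
      obtain ⟨q, hq, hmin⟩ := Finset.exists_min_image (L ×ˢ R)
        (fun q => (q.1 - q.2) + (q.2 - q.1)) (hL.product hR)
      obtain ⟨a, b⟩ := q
      rw [Finset.mem_product] at hq
      obtain ⟨ha, hb⟩ := hq
      dsimp only at ha hb hmin
      have hanR : a ∉ R := Finset.disjoint_left.1 hd ha
      have hbnL : b ∉ L := Finset.disjoint_right.1 hd hb
      have hab : a ≠ b := fun h => hanR (h ▸ hb)
      have hbetL : ∀ z ∈ L, ¬ (a < z ∧ z < b) ∧ ¬ (b < z ∧ z < a) := by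
        intro z hz
        have h1 := hmin (z, b) (Finset.mem_product.2 ⟨hz, hb⟩)
        dsimp only at h1
        omega
      have hbetR : ∀ z ∈ R, ¬ (a < z ∧ z < b) ∧ ¬ (b < z ∧ z < a) := by
        intro z hz
        have h1 := hmin (a, z) (Finset.mem_product.2 ⟨ha, hz⟩)
        dsimp only at h1
        omega
      have key1 : fp L R a = fp L R b := by
        rcases Nat.lt_or_ge a b with hlt | hge
        · have e1 : R.filter (· < b) = R.filter (· < a) := by
            ext x
            simp only [Finset.mem_filter]
            constructor
            · rintro ⟨hx, hxb⟩
              refine ⟨hx, ?_⟩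
              have hxa : x ≠ a := fun h => hanR (h ▸ hx)
              have h2 := (hbetR x hx).1
              omega
            · rintro ⟨hx, hxa⟩; exact ⟨hx, by omega⟩
          have e2 : L.filter (a < ·) = L.filter (b < ·) := by
            ext x
            simp only [Finset.mem_filter]
            constructor
            · rintro ⟨hx, hxa⟩
              refine ⟨hx, ?_⟩
              have hxb : x ≠ b := fun h => hbnL (h ▸ hx)
              have h2 := (hbetL x hx).1
              omega
            · rintro ⟨hx, hxb⟩; exact ⟨hx, by omega⟩
          simp only [fp, rk, crk]
          rw [e1, e2]
        · have hlt : b < a := by omega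
          have e1 : R.filter (· < a) = insert b (R.filter (· < b)) := by
            ext x
            simp only [Finset.mem_filter, Finset.mem_insert]
            constructor
            · rintro ⟨hx, hxa⟩
              have h2 := (hbetR x hx).2
              by_cases hxb : x = b
              · exact Or.inl hxb
              · exact Or.inr ⟨hx, by omega⟩
            · rintro (rfl | ⟨hx, hxb⟩)
              · exact ⟨hb, hlt⟩
              · exact ⟨hx, by omega⟩
          have e2 : L.filter (b < ·) = insert a (L.filter (a < ·)) := by
            ext x
            simp only [Finset.mem_filter, Finset.mem_insert]
            constructor
            · rintro ⟨hx, hxb⟩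
              have h2 := (hbetL x hx).2
              by_cases hxa : x = a
              · exact Or.inl hxa
              · exact Or.inr ⟨hx, by omega⟩
            · rintro (rfl | ⟨hx, hxa⟩)
              · exact ⟨ha, hlt⟩
              · exact ⟨hx, by omega⟩
          simp only [fp, rk, crk]
          rw [e1, e2, Finset.card_insert_of_notMem (by simp),
            Finset.card_insert_of_notMem (by simp)]
          omega
      have key2 : ∀ c, ((c ∈ L ∧ c ≠ a) ∨ (c ∈ R ∧ c ≠ b)) →
          fp (L.erase a) (R.erase b) c + 1 = fp L R c := by
        intro c hc
        have hca : c ≠ a := by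
          rcases hc with ⟨h1, h2⟩ | ⟨h1, h2⟩
          · exact h2
          · exact fun h => hanR (h ▸ h1)
        have hcb : c ≠ b := by
          rcases hc with ⟨h1, h2⟩ | ⟨h1, h2⟩
          · exact fun h => hbnL (h ▸ h1)
          · exact h2
        have hbet : ¬ (a < c ∧ c < b) ∧ ¬ (b < c ∧ c < a) := by
          rcases hc with ⟨h1, _⟩ | ⟨h1, _⟩
          · exact hbetL c h1
          · exact hbetR c h1
        have hcases : (c < a ∧ c < b) ∨ (a < c ∧ b < c) := by omega
        simp only [fp, rk, crk, Finset.filter_erase]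
        rcases hcases with ⟨h1, h2⟩ | ⟨h1, h2⟩
        · have hmem : a ∈ L.filter (fun x => c < x) := Finset.mem_filter.2 ⟨ha, h1⟩
          rw [Finset.erase_eq_of_notMem
            (by simp only [Finset.mem_filter, not_and]; exact fun _ => by omega),
            Finset.card_erase_of_mem hmem]
          have hpos : 0 < (L.filter (fun x => c < x)).card := Finset.card_pos.2 ⟨a, hmem⟩
          omega
        · have hmem : b ∈ R.filter (fun x => x < c) := Finset.mem_filter.2 ⟨hb, h2⟩
          rw [Finset.card_erase_of_mem hmem,
            Finset.erase_eq_of_notMem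
            (by simp only [Finset.mem_filter, not_and]; exact fun _ => by omega)]
          have hpos : 0 < (R.filter (fun x => x < c)).card := Finset.card_pos.2 ⟨b, hmem⟩
          omega
      -- apply induction hypothesis
      have hm1 : 1 ≤ L.card := Finset.card_pos.2 hL
      have hs1 : 1 ≤ R.card := Finset.card_pos.2 hR
      have hdL : (L.erase a).card = L.card - 1 := Finset.card_erase_of_mem ha
      have hdR : (R.erase b).card = R.card - 1 := Finset.card_erase_of_mem hb
      have hd' : Disjoint (L.erase a) (R.erase b) :=
        hd.mono (Finset.erase_subset _ _) (Finset.erase_subset _ _)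
      have E0 := ih (L.erase a) (R.erase b) (by omega) hd'
      have E1 := congrArg (Multiset.map (· + 1)) E0
      simp only [Multiset.map_add, Multiset.map_map, Multiset.map_singleton,
        map_add_one_Icc, hdL, hdR] at E1
      rw [show L.card - 1 + 1 = L.card by omega, show R.card - 1 + 1 = R.card by omega] at E1
      have eR : Multiset.map ((· + 1) ∘ fp (L.erase a) (R.erase b)) (R.erase b).val
          = Multiset.map (fp L R) (R.erase b).val := by
        apply Multiset.map_congr rfl
        intro c hc
        have hc' : c ∈ R.erase b := hc
        rw [Finset.mem_erase] at hc'
        exact key2 c (Or.inr ⟨hc'.2, hc'.1⟩)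
      have eL : Multiset.map ((· + 1) ∘ fp (L.erase a) (R.erase b)) (L.erase a).val
          = Multiset.map (fp L R) (L.erase a).val := by
        apply Multiset.map_congr rfl
        intro c hc
        have hc' : c ∈ L.erase a := hc
        rw [Finset.mem_erase] at hc'
        exact key2 c (Or.inl ⟨hc'.2, hc'.1⟩)
      rw [eR, eL] at E1
      -- rewrite the goal
      have gR : R.val = b ::ₘ (R.erase b).val := by
        rw [Finset.erase_val]
        exact (Multiset.cons_erase (by rw [Finset.mem_val]; exact hb)).symm
      have gL : L.val = a ::ₘ (L.erase a).val := by
        rw [Finset.erase_val]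
        exact (Multiset.cons_erase (by rw [Finset.mem_val]; exact ha)).symm
      rw [gR, gL, icc_cons 1 L.card hm1, icc_cons 1 R.card hs1,
        Multiset.map_cons, Multiset.map_cons, key1]
      simp only [← Multiset.singleton_add]
      have E2 : ({fp L R b} + {1})
            + (Multiset.map (fp L R) (R.erase b).val + (Finset.Icc 2 L.card).val + {R.card})
          = ({fp L R b} + {1})
            + (Multiset.map (fp L R) (L.erase a).val + {L.card} + (Finset.Icc 2 R.card).val) := by
        rw [E1]
      refine Eq.trans ?_ (Eq.trans E2 ?_) <;> abel


lemma icc_split (a b c : ℕ) (h1 : a ≤ b + 1) (h2 : b ≤ c) :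
    (Finset.Icc a b).val + (Finset.Icc (b+1) c).val = (Finset.Icc a c).val := by
  have hdisj : Disjoint (Finset.Icc a b) (Finset.Icc (b+1) c) := by
    rw [Finset.disjoint_left]
    intro x hx hx'
    rw [Finset.mem_Icc] at hx hx'
    omega
  have hval : ((Finset.Icc a b).disjUnion (Finset.Icc (b+1) c) hdisj).val
      = (Finset.Icc a b).val + (Finset.Icc (b+1) c).val := by
    simp [Finset.disjUnion]
  rw [← hval]
  congr 1
  rw [Finset.disjUnion_eq_union]
  ext x
  simp only [Finset.mem_union, Finset.mem_Icc]
  omega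
-- ===== global part (to be appended after tworun, inside namespace) =====

/-- partial sums of run lengths -/
def Sm (ρ : ℕ → ℕ) (k : ℕ) : ℕ := ∑ j ∈ Finset.range k, ρ j

lemma Sm_succ (ρ : ℕ → ℕ) (k : ℕ) : Sm ρ (k+1) = Sm ρ k + ρ k := Finset.sum_range_succ ρ k

lemma Sm_mono (ρ : ℕ → ℕ) {i j : ℕ} (h : i ≤ j) : Sm ρ i ≤ Sm ρ j :=
  Finset.sum_le_sum_of_subset (Finset.range_subset_range.2 h)

section Global

variable {n r : ℕ} {ρ τ τinv : ℕ → ℕ}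

lemma runPos_eq (n : ℕ) (ρ : ℕ → ℕ) (k : ℕ) :
    runPos n ρ k = Finset.Icc (n + 1 - Sm ρ (k+1)) (n - Sm ρ k) := rfl

variable (hρpos : ∀ k, k ≤ r → 0 < ρ k) (hsum : Sm ρ (r+1) = n)

include hρpos hsum

lemma Sm_le_n {k : ℕ} (hk : k ≤ r + 1) : Sm ρ k ≤ n := hsum ▸ Sm_mono ρ hk

lemma Sm_lt (k : ℕ) (hk : k ≤ r) : Sm ρ k < Sm ρ (k+1) := by
  have := hρpos k hk; rw [Sm_succ]; omega

lemma mem_runPos_iff {k p : ℕ} (hk : k ≤ r) :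
    p ∈ runPos n ρ k ↔ (n + 1 - Sm ρ (k+1) ≤ p ∧ p ≤ n - Sm ρ k) := by
  rw [runPos_eq, Finset.mem_Icc]

lemma runPos_subset {k : ℕ} (hk : k ≤ r) : runPos n ρ k ⊆ Finset.Icc 1 n := by
  intro p hp
  rw [mem_runPos_iff hρpos hsum hk] at hp
  have h1 : Sm ρ (k+1) ≤ n := Sm_le_n hρpos hsum (by omega)
  have h2 : Sm ρ k < Sm ρ (k+1) := Sm_lt hρpos hsum k hk
  rw [Finset.mem_Icc]
  omega

lemma card_runPos {k : ℕ} (hk : k ≤ r) : (runPos n ρ k).card = ρ k := by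
  rw [runPos_eq, Nat.card_Icc]
  have h1 : Sm ρ (k+1) ≤ n := Sm_le_n hρpos hsum (by omega)
  have h2 : Sm ρ (k+1) = Sm ρ k + ρ k := Sm_succ ρ k
  omega

lemma runIdxOf_eq {k p : ℕ} (hk : k ≤ r) (hp : p ∈ runPos n ρ k) :
    runIdxOf n r ρ p = k := by
  rw [mem_runPos_iff hρpos hsum hk] at hp
  have h1 : Sm ρ (k+1) ≤ n := Sm_le_n hρpos hsum (by omega)
  have h2 : Sm ρ k < Sm ρ (k+1) := Sm_lt hρpos hsum k hk
  have hfilter : (Finset.range (r+1)).filter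
      (fun m => ∑ j ∈ Finset.range (m+1), ρ j ≤ n - p) = Finset.range k := by
    ext m
    simp only [Finset.mem_filter, Finset.mem_range]
    have hmono1 : m < k → Sm ρ (m+1) ≤ Sm ρ k := fun h => Sm_mono ρ (by omega)
    have hmono2 : k ≤ m → Sm ρ (k+1) ≤ Sm ρ (m+1) := fun h => Sm_mono ρ (by omega)
    show (m < r + 1 ∧ Sm ρ (m+1) ≤ n - p) ↔ m < k
    constructor
    · rintro ⟨hm, hle⟩
      by_contra hc
      have := hmono2 (by omega)
      omega
    · intro hm
      have := hmono1 hm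
      exact ⟨by omega, by omega⟩
  rw [runIdxOf, hfilter, Finset.card_range]

/-- disjoint union decomposition of positions -/
lemma partition_val :
    (Finset.Icc 1 n).val = ∑ k ∈ Finset.range (r+1), (runPos n ρ k).val := by
  have key : ∀ t, t ≤ r + 1 →
      ∑ k ∈ Finset.range t, (runPos n ρ k).val = (Finset.Icc (n + 1 - Sm ρ t) n).val := by
    intro t
    induction t with
    | zero =>
      intro _
      simp [Sm, Finset.Icc_eq_empty (by omega : ¬ (n+1-0 : ℕ) ≤ n)]
    | succ t iht =>
      intro ht
      have h1 : Sm ρ t < Sm ρ (t+1) := Sm_lt hρpos hsum t (by omega)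
      have h2 : Sm ρ (t+1) ≤ n := Sm_le_n hρpos hsum ht
      rw [Finset.sum_range_succ, iht (by omega), runPos_eq]
      rw [show n + 1 - Sm ρ t = (n - Sm ρ t) + 1 by omega]
      rw [add_comm]
      exact icc_split _ _ _ (by omega) (by omega)
  have := key (r+1) le_rfl
  rw [this, hsum, show n + 1 - n = 1 by omega]

end Global
section Perm

variable {n r : ℕ} {ρ τ τinv : ℕ → ℕ}

/-- values in run k -/
def Vr (n : ℕ) (ρ τ : ℕ → ℕ) (k : ℕ) : Finset ℕ := (runPos n ρ k).image τ

lemma sched_def (n r : ℕ) (ρ τ τinv : ℕ → ℕ) (l c : ℕ) :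
    sched n r ρ τ τinv l c =
      if runIdxOf n r ρ (τinv c) < l then
        ((runPos n ρ (runIdxOf n r ρ (τinv c))).filter (fun p' => τ p' < c)).card
          + ((runPos n ρ (runIdxOf n r ρ (τinv c) + 1)).filter (fun p' => c < τ p')).card
      else if runIdxOf n r ρ (τinv c) = l then
        ((runPos n ρ (runIdxOf n r ρ (τinv c))).filter (fun p' => τinv c ≤ p')).card
      else
        ((runPos n ρ (runIdxOf n r ρ (τinv c))).filter (fun p' => c < τ p')).card
          + ((runPos n ρ (runIdxOf n r ρ (τinv c) - 1)).filter (fun p' => τ p' < c)).card := rfl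

lemma icc_rev (A B : ℕ) :
    Multiset.map (fun p => B + 1 - p) (Finset.Icc A B).val = (Finset.Icc 1 (B + 1 - A)).val := by
  rw [map_val_eq_image_val _ _ (fun x hx y hy h => by
    rw [Finset.mem_Icc] at hx hy; omega)]
  congr 1
  ext x
  simp only [Finset.mem_image, Finset.mem_Icc]
  constructor
  · rintro ⟨p, hp, rfl⟩; omega
  · intro hx; exact ⟨B + 1 - x, by omega, by omega⟩

lemma map_sum_val (f : ℕ → ℕ) (s : ℕ → Multiset ℕ) (t : Finset ℕ) :
    Multiset.map f (∑ k ∈ t, s k) = ∑ k ∈ t, Multiset.map f (s k) := by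
  classical
  induction t using Finset.induction_on with
  | empty => simp
  | @insert a s h ih => rw [Finset.sum_insert h, Finset.sum_insert h, Multiset.map_add, ih]

variable (hρpos : ∀ k, k ≤ r → 0 < ρ k) (hsum : Sm ρ (r+1) = n)
variable (hτmem : ∀ p, 1 ≤ p → p ≤ n → τ p ∈ Finset.Icc 1 n)
variable (hinv : ∀ p, 1 ≤ p → p ≤ n → τinv (τ p) = p)

include hτmem hinv

lemma tau_injOn : ∀ p₁ ∈ Finset.Icc 1 n, ∀ p₂ ∈ Finset.Icc 1 n, τ p₁ = τ p₂ → p₁ = p₂ := by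
  intro p₁ h₁ p₂ h₂ h
  rw [Finset.mem_Icc] at h₁ h₂
  have e₁ := hinv p₁ h₁.1 h₁.2
  have e₂ := hinv p₂ h₂.1 h₂.2
  rw [← e₁, ← e₂, h]

lemma map_tau_icc : Multiset.map τ (Finset.Icc 1 n).val = (Finset.Icc 1 n).val := by
  rw [map_val_eq_image_val _ _ (tau_injOn hτmem hinv)]
  congr 1
  apply Finset.eq_of_subset_of_card_le
  · intro x hx
    obtain ⟨p, hp, rfl⟩ := Finset.mem_image.1 hx
    rw [Finset.mem_Icc] at hp
    exact hτmem p hp.1 hp.2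
  · rw [Finset.card_image_of_injOn (fun a ha b hb => tau_injOn hτmem hinv a ha b hb)]

include hρpos hsum

lemma tau_injOn_run {k : ℕ} (hk : k ≤ r) :
    ∀ p₁ ∈ runPos n ρ k, ∀ p₂ ∈ runPos n ρ k, τ p₁ = τ p₂ → p₁ = p₂ :=
  fun p₁ h₁ p₂ h₂ h => tau_injOn hτmem hinv p₁ (runPos_subset hρpos hsum hk h₁)
    p₂ (runPos_subset hρpos hsum hk h₂) h

lemma map_tau_runPos {k : ℕ} (hk : k ≤ r) :
    Multiset.map τ (runPos n ρ k).val = (Vr n ρ τ k).val :=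
  map_val_eq_image_val _ _ (tau_injOn_run hρpos hsum hτmem hinv hk)

lemma card_Vr {k : ℕ} (hk : k ≤ r) : (Vr n ρ τ k).card = ρ k := by
  rw [Vr, Finset.card_image_of_injOn
    (fun a ha b hb => tau_injOn_run hρpos hsum hτmem hinv hk a ha b hb),
    card_runPos hρpos hsum hk]

lemma disjoint_Vr {j k : ℕ} (hj : j ≤ r) (hk : k ≤ r) (hne : j ≠ k) :
    Disjoint (Vr n ρ τ j) (Vr n ρ τ k) := by
  rw [Finset.disjoint_left]
  intro x hx hx'
  obtain ⟨p, hp, rfl⟩ := Finset.mem_image.1 hx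
  obtain ⟨q, hq, he⟩ := Finset.mem_image.1 hx'
  have : q = p := tau_injOn hτmem hinv q (runPos_subset hρpos hsum hk hq)
    p (runPos_subset hρpos hsum hj hp) he
  subst this
  have e1 := runIdxOf_eq hρpos hsum hj hp
  have e2 := runIdxOf_eq hρpos hsum hk hq
  omega

lemma filter_lt_card {k : ℕ} (hk : k ≤ r) (c : ℕ) :
    ((runPos n ρ k).filter (fun p' => τ p' < c)).card = rk (Vr n ρ τ k) c := by
  rw [rk, Vr, Finset.filter_image,
    Finset.card_image_of_injOn (fun a ha b hb =>
      tau_injOn_run hρpos hsum hτmem hinv hk a (Finset.filter_subset _ _ ha)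
        b (Finset.filter_subset _ _ hb))]

lemma filter_gt_card {k : ℕ} (hk : k ≤ r) (c : ℕ) :
    ((runPos n ρ k).filter (fun p' => c < τ p')).card = crk (Vr n ρ τ k) c := by
  rw [crk, Vr, Finset.filter_image,
    Finset.card_image_of_injOn (fun a ha b hb =>
      tau_injOn_run hρpos hsum hτmem hinv hk a (Finset.filter_subset _ _ ha)
        b (Finset.filter_subset _ _ hb))]

omit hτmem hinv in
/-- positions-to-values bounds for p in a run -/
lemma run_mem_bounds {k p : ℕ} (hk : k ≤ r) (hp : p ∈ runPos n ρ k) :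
    1 ≤ p ∧ p ≤ n := by
  have := runPos_subset hρpos hsum hk hp
  rwa [Finset.mem_Icc] at this

lemma sched_lt {l k p : ℕ} (hk1 : k + 1 ≤ r) (hkl : k < l) (hp : p ∈ runPos n ρ k) :
    sched n r ρ τ τinv l (τ p) = fp (Vr n ρ τ (k+1)) (Vr n ρ τ k) (τ p) := by
  obtain ⟨hp1, hp2⟩ := run_mem_bounds hρpos hsum (by omega) hp
  rw [sched_def, hinv p hp1 hp2, runIdxOf_eq hρpos hsum (by omega) hp, if_pos hkl,
    filter_lt_card hρpos hsum hτmem hinv (by omega),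
    filter_gt_card hρpos hsum hτmem hinv (by omega)]
  rfl

lemma sched_gt {l k p : ℕ} (hk : k ≤ r) (hkl : l < k) (hp : p ∈ runPos n ρ k) :
    sched n r ρ τ τinv l (τ p) = fp (Vr n ρ τ k) (Vr n ρ τ (k-1)) (τ p) := by
  obtain ⟨hp1, hp2⟩ := run_mem_bounds hρpos hsum hk hp
  rw [sched_def, hinv p hp1 hp2, runIdxOf_eq hρpos hsum hk hp,
    if_neg (by omega), if_neg (by omega),
    filter_gt_card hρpos hsum hτmem hinv hk,
    filter_lt_card hρpos hsum hτmem hinv (by omega)]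
  rw [fp, add_comm]

lemma sched_eqrun {l p : ℕ} (hl : l ≤ r) (hp : p ∈ runPos n ρ l) :
    sched n r ρ τ τinv l (τ p) = (n - Sm ρ l) + 1 - p := by
  obtain ⟨hp1, hp2⟩ := run_mem_bounds hρpos hsum hl hp
  rw [sched_def, hinv p hp1 hp2, runIdxOf_eq hρpos hsum hl hp,
    if_neg (lt_irrefl l), if_pos rfl]
  have hfil : (runPos n ρ l).filter (fun p' => p ≤ p') = Finset.Icc p (n - Sm ρ l) := by
    rw [mem_runPos_iff hρpos hsum hl] at hp
    ext x
    rw [runPos_eq]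
    simp only [Finset.mem_filter, Finset.mem_Icc]
    omega
  rw [hfil, Nat.card_Icc]

lemma sched_offrun {l k p : ℕ} (hk : k ≤ r) (hkl : k ≠ l) (hkl1 : k ≠ l - 1)
    (hl : 1 ≤ l) (hp : p ∈ runPos n ρ k) :
    sched n r ρ τ τinv l (τ p) = sched n r ρ τ τinv (l-1) (τ p) := by
  obtain ⟨hp1, hp2⟩ := run_mem_bounds hρpos hsum hk hp
  rw [sched_def, sched_def, hinv p hp1 hp2, runIdxOf_eq hρpos hsum hk hp]
  rcases Nat.lt_or_ge k l with hlt | hge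
  · have hlt1 : k < l - 1 := by omega
    rw [if_pos hlt, if_pos hlt1]
  · have hgt : l < k := by omega
    rw [if_neg (by omega), if_neg (by omega), if_neg (by omega), if_neg (by omega)]

lemma T_self {l : ℕ} (hl : l ≤ r) :
    Multiset.map (fun p => sched n r ρ τ τinv l (τ p)) (runPos n ρ l).val
      = (Finset.Icc 1 (ρ l)).val := by
  rw [Multiset.map_congr rfl
    (fun p hp => sched_eqrun hρpos hsum hτmem hinv hl hp)]
  rw [runPos_eq, icc_rev]
  congr 2
  have h1 : Sm ρ (l+1) ≤ n := Sm_le_n hρpos hsum (by omega)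
  have h2 : Sm ρ (l+1) = Sm ρ l + ρ l := Sm_succ ρ l
  omega

lemma T_down {l k : ℕ} (hk1 : k + 1 ≤ r) (hkl : k < l) :
    Multiset.map (fun p => sched n r ρ τ τinv l (τ p)) (runPos n ρ k).val
      = Multiset.map (fp (Vr n ρ τ (k+1)) (Vr n ρ τ k)) (Vr n ρ τ k).val := by
  rw [Multiset.map_congr rfl
    (fun p hp => sched_lt hρpos hsum hτmem hinv hk1 hkl hp)]
  rw [← map_tau_runPos hρpos hsum hτmem hinv (by omega : k ≤ r), Multiset.map_map]
  rfl

lemma T_up {l k : ℕ} (hk : k ≤ r) (hkl : l < k) :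
    Multiset.map (fun p => sched n r ρ τ τinv l (τ p)) (runPos n ρ k).val
      = Multiset.map (fp (Vr n ρ τ k) (Vr n ρ τ (k-1))) (Vr n ρ τ k).val := by
  rw [Multiset.map_congr rfl
    (fun p hp => sched_gt hρpos hsum hτmem hinv hk hkl hp)]
  rw [← map_tau_runPos hρpos hsum hτmem hinv hk, Multiset.map_map]
  rfl

lemma M_eq (l : ℕ) :
    Multiset.map (sched n r ρ τ τinv l) (Finset.Icc 1 n).val
      = ∑ k ∈ Finset.range (r+1),
          Multiset.map (fun p => sched n r ρ τ τinv l (τ p)) (runPos n ρ k).val := by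
  conv_lhs => rw [← map_tau_icc hτmem hinv]
  rw [Multiset.map_map, partition_val hρpos hsum, map_sum_val]
  rfl

lemma step_lemma {l : ℕ} (hl : 1 ≤ l) (hlr : l ≤ r) :
    Multiset.map (sched n r ρ τ τinv l) (Finset.Icc 1 n).val + {ρ (l-1)}
      = Multiset.map (sched n r ρ τ τinv (l-1)) (Finset.Icc 1 n).val + {ρ l} := by
  rw [M_eq hρpos hsum hτmem hinv l, M_eq hρpos hsum hτmem hinv (l-1)]
  have hmem_l : l ∈ Finset.range (r+1) := Finset.mem_range.2 (by omega)
  have hmem_l1 : l - 1 ∈ (Finset.range (r+1)).erase l :=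
    Finset.mem_erase.2 ⟨by omega, Finset.mem_range.2 (by omega)⟩
  rw [← Finset.add_sum_erase _ _ hmem_l, ← Finset.add_sum_erase _ _ hmem_l]
  rw [← Finset.add_sum_erase _ _ hmem_l1, ← Finset.add_sum_erase _ _ hmem_l1]
  have hcongr : ∑ k ∈ ((Finset.range (r+1)).erase l).erase (l-1),
        Multiset.map (fun p => sched n r ρ τ τinv l (τ p)) (runPos n ρ k).val
      = ∑ k ∈ ((Finset.range (r+1)).erase l).erase (l-1),
        Multiset.map (fun p => sched n r ρ τ τinv (l-1) (τ p)) (runPos n ρ k).val := by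
    apply Finset.sum_congr rfl
    intro k hk
    rw [Finset.mem_erase, Finset.mem_erase, Finset.mem_range] at hk
    exact Multiset.map_congr rfl (fun p hp =>
      sched_offrun hρpos hsum hτmem hinv (by omega) hk.2.1 hk.1 hl hp)
  rw [hcongr]
  rw [T_self hρpos hsum hτmem hinv hlr, T_self hρpos hsum hτmem hinv (by omega : l - 1 ≤ r)]
  have hd1 : Multiset.map (fun p => sched n r ρ τ τinv l (τ p)) (runPos n ρ (l-1)).val
      = Multiset.map (fp (Vr n ρ τ l) (Vr n ρ τ (l-1))) (Vr n ρ τ (l-1)).val := by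
    have := T_down hρpos hsum hτmem hinv (l := l) (k := l-1) (by omega) (by omega)
    rwa [show l - 1 + 1 = l by omega] at this
  have hu1 : Multiset.map (fun p => sched n r ρ τ τinv (l-1) (τ p)) (runPos n ρ l).val
      = Multiset.map (fp (Vr n ρ τ l) (Vr n ρ τ (l-1))) (Vr n ρ τ l).val :=
    T_up hρpos hsum hτmem hinv hlr (by omega)
  rw [hd1, hu1]
  have E := tworun ((Vr n ρ τ l).card + (Vr n ρ τ (l-1)).card) (Vr n ρ τ l) (Vr n ρ τ (l-1))
    le_rfl (disjoint_Vr hρpos hsum hτmem hinv hlr (by omega) (by omega))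
  rw [card_Vr hρpos hsum hτmem hinv hlr, card_Vr hρpos hsum hτmem hinv (by omega : l - 1 ≤ r)] at E
  set A := ∑ k ∈ ((Finset.range (r+1)).erase l).erase (l-1),
    Multiset.map (fun p => sched n r ρ τ τinv (l-1) (τ p)) (runPos n ρ k).val with hA
  have E2 : A + (Multiset.map (fp (Vr n ρ τ l) (Vr n ρ τ (l-1))) (Vr n ρ τ (l-1)).val
        + (Finset.Icc 1 (ρ l)).val + {ρ (l-1)})
      = A + (Multiset.map (fp (Vr n ρ τ l) (Vr n ρ τ (l-1))) (Vr n ρ τ l).val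
        + {ρ l} + (Finset.Icc 1 (ρ (l-1))).val) := by rw [E]
  refine Eq.trans ?_ (Eq.trans E2 ?_) <;> abel

end Perm
section Final

variable {n r : ℕ} {ρ τ τinv : ℕ → ℕ}
variable (hρpos : ∀ k, k ≤ r → 0 < ρ k) (hsum : Sm ρ (r+1) = n)
variable (hτmem : ∀ p, 1 ≤ p → p ≤ n → τ p ∈ Finset.Icc 1 n)
variable (hinv : ∀ p, 1 ≤ p → p ≤ n → τinv (τ p) = p)

include hρpos hsum hτmem hinv

lemma telescope : ∀ l : ℕ, l ≤ r →
    Multiset.map (sched n r ρ τ τinv l) (Finset.Icc 1 n).val + {ρ 0}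
      = Multiset.map (sched n r ρ τ τinv 0) (Finset.Icc 1 n).val + {ρ l} := by
  intro l
  induction l with
  | zero => intro _; rfl
  | succ l ihl =>
    intro hlr
    have hstep := step_lemma hρpos hsum hτmem hinv (l := l + 1) (by omega) hlr
    rw [show l + 1 - 1 = l by omega] at hstep
    have ihl' := ihl (by omega)
    have key : Multiset.map (sched n r ρ τ τinv (l+1)) (Finset.Icc 1 n).val + {ρ 0} + {ρ l}
        = Multiset.map (sched n r ρ τ τinv 0) (Finset.Icc 1 n).val + {ρ (l+1)} + {ρ l} := by
      calc Multiset.map (sched n r ρ τ τinv (l+1)) (Finset.Icc 1 n).val + {ρ 0} + {ρ l}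
          = Multiset.map (sched n r ρ τ τinv (l+1)) (Finset.Icc 1 n).val + {ρ l} + {ρ 0} := by
            abel
        _ = Multiset.map (sched n r ρ τ τinv l) (Finset.Icc 1 n).val + {ρ (l+1)} + {ρ 0} := by
            rw [hstep]
        _ = (Multiset.map (sched n r ρ τ τinv l) (Finset.Icc 1 n).val + {ρ 0}) + {ρ (l+1)} := by
            abel
        _ = (Multiset.map (sched n r ρ τ τinv 0) (Finset.Icc 1 n).val + {ρ l}) + {ρ (l+1)} := by
            rw [ihl']
        _ = Multiset.map (sched n r ρ τ τinv 0) (Finset.Icc 1 n).val + {ρ (l+1)} + {ρ l} := by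
            abel
    exact add_right_cancel key

end Final

end Stmt9Aux

/-- For a permutation `τ ∈ S_n` with runs of lengths `ρ r, …, ρ 1, ρ 0`
and `1 ≤ l ≤ r`, the multiset of `l`-schedule numbers equals the multiset of
`0`-schedule numbers with one copy of `ρ l` added and one copy of `ρ 0` removed. -/
theorem stmt_9 (n r : ℕ) (ρ τ τinv : ℕ → ℕ) (l : ℕ) (hl : 1 ≤ l) (hlr : l ≤ r)
    (hρpos : ∀ k, k ≤ r → 0 < ρ k)
    (hsum : ∑ k ∈ Finset.range (r + 1), ρ k = n)
    (hτmem : ∀ p, 1 ≤ p → p ≤ n → τ p ∈ Finset.Icc 1 n)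
    (hinv : ∀ p, 1 ≤ p → p ≤ n → τinv (τ p) = p)
    (hinv' : ∀ c, 1 ≤ c → c ≤ n → τinv c ∈ Finset.Icc 1 n ∧ τ (τinv c) = c)
    (hincr : ∀ p, 1 ≤ p → p + 1 ≤ n →
        runIdxOf n r ρ p = runIdxOf n r ρ (p + 1) → τ p < τ (p + 1))
    (hdesc : ∀ p, 1 ≤ p → p + 1 ≤ n →
        runIdxOf n r ρ p ≠ runIdxOf n r ρ (p + 1) → τ (p + 1) < τ p)
    :
    Multiset.map (sched n r ρ τ τinv l) (Finset.Icc 1 n).val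
      = (Multiset.map (sched n r ρ τ τinv 0) (Finset.Icc 1 n).val + {ρ l}).erase (ρ 0) := by
  have htel := Stmt9Aux.telescope hρpos hsum hτmem hinv l hlr
  rw [← htel, add_comm, Multiset.singleton_add, Multiset.erase_cons_head]
end

section
/- Let τ ∈ S_n have runs of lengths ρ_r, ..., ρ_1, ρ_0 and schedule numbers (w_i). For 1 ≤ l ≤ r, the product of q-integers of the l-schedule numbers satisfies Π_{c=1}^{n} [w^{(l)}(c)]_q = ([ρ_l]_q / [ρ_0]_q) · Π_{i=1}^{n} [w_i]_q in the field of rational functions ℚ(q); equivalently [ρ_0]_q · Π_c [w^{(l)}(c)]_q = [ρ_l]_q · Π_i [w_i]_q in ℤ[q]. -/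
open Finset Polynomial

noncomputable def qP (m : ℕ) : Polynomial ℤ := ∑ i ∈ Finset.range m, (Polynomial.X : Polynomial ℤ) ^ i

lemma qP_ne_zero {m : ℕ} (hm : 1 ≤ m) : qP m ≠ 0 := by
  intro h
  have h2 := congrArg (Polynomial.eval 1) h
  simp [qP, Polynomial.eval_finset_sum] at h2
  omega

lemma merge_lemma (P : ℕ → Polynomial ℤ) (hP : ∀ m, 1 ≤ m → P m ≠ 0)
    (A B : Finset ℕ) (hd : Disjoint A B) :
    P A.card * (∏ x ∈ A, P ((A.filter (· < x)).card + (B.filter (x < ·)).card))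
      * ∏ i ∈ Finset.range B.card, P (i + 1)
  = P B.card * (∏ x ∈ B, P ((A.filter (· < x)).card + (B.filter (x < ·)).card))
      * ∏ i ∈ Finset.range A.card, P (i + 1) := by
  generalize hN : (A ∪ B).card = N
  induction N using Nat.strong_induction_on generalizing P A B with
  | _ N ih =>
  rcases (A ∪ B).eq_empty_or_nonempty with hne | hne
  · rw [Finset.union_eq_empty] at hne
    simp [hne.1, hne.2]
  · set m := (A ∪ B).max' hne with hm
    have hmmem : m ∈ A ∪ B := (A ∪ B).max'_mem hne
    have hmax : ∀ x ∈ A ∪ B, x ≤ m := fun x hx => Finset.le_max' _ x hx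
    have hfm2 : B.filter (m < ·) = ∅ := by
      apply Finset.filter_eq_empty_iff.mpr
      intro x hx
      exact Nat.not_lt.mpr (hmax x (Finset.mem_union_right _ hx))
    by_cases hmA : m ∈ A
    · -- max is in A
      have hmB : m ∉ B := fun h => (Finset.disjoint_left.mp hd hmA) h
      set A' := A.erase m with hA'
      have hmA' : m ∉ A' := Finset.notMem_erase m A
      have hlt : ∀ x, x ∈ A' ∪ B → x < m := by
        intro x hx
        rcases Finset.mem_union.mp hx with h | h
        · exact lt_of_le_of_ne (hmax x (Finset.mem_union_left _ (Finset.mem_of_mem_erase h)))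
            (Finset.ne_of_mem_erase h)
        · exact lt_of_le_of_ne (hmax x (Finset.mem_union_right _ h)) (fun e => hmB (e ▸ h))
      have hfiltA : ∀ x, x ∈ A' ∪ B → A.filter (· < x) = A'.filter (· < x) := by
        intro x hx
        rw [hA', Finset.filter_erase]
        rw [Finset.erase_eq_of_notMem]
        intro h
        exact absurd (Finset.mem_filter.mp h).2 (Nat.not_lt.mpr (hlt x hx).le)
      have hfm1 : A.filter (· < m) = A' := by
        ext y
        simp only [Finset.mem_filter, hA', Finset.mem_erase]
        constructor
        · rintro ⟨hy, hy2⟩; exact ⟨Nat.ne_of_lt hy2, hy⟩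
        · rintro ⟨hy1, hy2⟩
          exact ⟨hy2, hlt y (Finset.mem_union_left _ (Finset.mem_erase.mpr ⟨hy1, hy2⟩))⟩
      have hcard : A.card = A'.card + 1 := by
        rw [hA', Finset.card_erase_of_mem hmA] at *
        have := Finset.card_pos.mpr ⟨m, hmA⟩
        omega
      have hd' : Disjoint A' B := hd.mono_left (Finset.erase_subset m A)
      have hNlt : (A' ∪ B).card < N := by
        rw [← hN]
        apply Finset.card_lt_card
        refine (Finset.ssubset_iff_of_subset
          (Finset.union_subset_union (Finset.erase_subset m A) (subset_refl B))).mpr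
          ⟨m, Finset.mem_union_left _ hmA, ?_⟩
        simp [hmA', hmB]
      have IH := ih _ hNlt P hP A' B hd' rfl
      have hprodA : (∏ x ∈ A, P ((A.filter (· < x)).card + (B.filter (x < ·)).card))
          = P A'.card * ∏ x ∈ A', P ((A'.filter (· < x)).card + (B.filter (x < ·)).card) := by
        rw [← Finset.mul_prod_erase A _ hmA, hfm1, hfm2, ← hA']
        simp only [Finset.card_empty, Nat.add_zero]
        congr 1
        apply Finset.prod_congr rfl
        intro x hx
        rw [hfiltA x (Finset.mem_union_left _ hx)]
      have hprodB : (∏ x ∈ B, P ((A.filter (· < x)).card + (B.filter (x < ·)).card))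
          = ∏ x ∈ B, P ((A'.filter (· < x)).card + (B.filter (x < ·)).card) := by
        apply Finset.prod_congr rfl
        intro x hx
        rw [hfiltA x (Finset.mem_union_right _ hx)]
      rw [hprodA, hprodB, hcard, Finset.prod_range_succ]
      linear_combination P (A'.card + 1) * IH
    · -- max is in B
      have hmB : m ∈ B := by
        rcases Finset.mem_union.mp hmmem with h | h
        · exact absurd h hmA
        · exact h
      set B' := B.erase m with hB'
      have hmB' : m ∉ B' := Finset.notMem_erase m B
      have hlt : ∀ x, x ∈ A ∪ B' → x < m := by
        intro x hx
        rcases Finset.mem_union.mp hx with h | h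
        · exact lt_of_le_of_ne (hmax x (Finset.mem_union_left _ h)) (fun e => hmA (e ▸ h))
        · exact lt_of_le_of_ne (hmax x (Finset.mem_union_right _ (Finset.mem_of_mem_erase h)))
            (Finset.ne_of_mem_erase h)
      have hfiltB : ∀ x, x ∈ A ∪ B' →
          (B.filter (x < ·)).card = (B'.filter (x < ·)).card + 1 := by
        intro x hx
        have : B.filter (x < ·) = insert m (B'.filter (x < ·)) := by
          rw [hB', Finset.filter_erase]
          rw [Finset.insert_erase]
          exact Finset.mem_filter.mpr ⟨hmB, hlt x hx⟩
        rw [this, Finset.card_insert_of_notMem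
          (fun h => hmB' (Finset.mem_of_mem_filter m h))]
      have hfm1 : A.filter (· < m) = A := by
        apply Finset.filter_eq_self.mpr
        intro x hx; exact hlt x (Finset.mem_union_left _ hx)
      have hcard : B.card = B'.card + 1 := by
        rw [hB', Finset.card_erase_of_mem hmB]
        have := Finset.card_pos.mpr ⟨m, hmB⟩
        omega
      have hd' : Disjoint A B' := hd.mono_right (Finset.erase_subset m B)
      have hNlt : (A ∪ B').card < N := by
        rw [← hN]
        apply Finset.card_lt_card
        refine (Finset.ssubset_iff_of_subset
          (Finset.union_subset_union (subset_refl A) (Finset.erase_subset m B))).mpr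
          ⟨m, Finset.mem_union_right _ hmB, ?_⟩
        simp [hmA, hmB']
      have IH := ih _ hNlt (fun i => P (i + 1)) (fun m _ => hP (m + 1) (by omega)) A B' hd' rfl
      have hprodB : (∏ x ∈ B, P ((A.filter (· < x)).card + (B.filter (x < ·)).card))
          = P A.card * ∏ x ∈ B', P ((A.filter (· < x)).card + (B'.filter (x < ·)).card + 1) := by
        rw [← Finset.mul_prod_erase B _ hmB, hfm1, hfm2, ← hB']
        simp only [Finset.card_empty, Nat.add_zero]
        congr 1
        apply Finset.prod_congr rfl
        intro x hx
        rw [hfiltB x (Finset.mem_union_right _ hx), ← Nat.add_assoc]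
      have hprodA : (∏ x ∈ A, P ((A.filter (· < x)).card + (B.filter (x < ·)).card))
          = ∏ x ∈ A, P ((A.filter (· < x)).card + (B'.filter (x < ·)).card + 1) := by
        apply Finset.prod_congr rfl
        intro x hx
        rw [hfiltB x (Finset.mem_union_left _ hx), ← Nat.add_assoc]
      rw [hprodA, hprodB, hcard]
      have hsplit : (∏ i ∈ Finset.range (B'.card + 1), P (i + 1))
          = (∏ i ∈ Finset.range B'.card, P (i + 1 + 1)) * P 1 :=
        Finset.prod_range_succ' (fun i => P (i + 1)) B'.card
      have hsplit2 : P 1 * (∏ i ∈ Finset.range A.card, P (i + 1 + 1))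
          = (∏ i ∈ Finset.range A.card, P (i + 1)) * P (A.card + 1) := by
        rw [← Finset.prod_range_succ (fun i => P (i + 1)) A.card,
          Finset.prod_range_succ' (fun i => P (i + 1)) A.card]
        ring
      apply mul_left_cancel₀ (hP (A.card + 1) (by omega))
      rw [hsplit]
      linear_combination (P A.card * P 1) * IH
        + (P A.card * P (B'.card + 1) * ∏ x ∈ B', P ((A.filter (· < x)).card + (B'.filter (x < ·)).card + 1)) * hsplit2

section runs
variable {n r : ℕ} {ρ : ℕ → ℕ}

lemma sum_range_mono (ρ : ℕ → ℕ) {i j : ℕ} (h : i ≤ j) :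
    ∑ x ∈ Finset.range i, ρ x ≤ ∑ x ∈ Finset.range j, ρ x :=
  Finset.sum_le_sum_of_subset (Finset.range_subset_range.mpr h)

variable (hsum : ∑ k ∈ Finset.range (r + 1), ρ k = n)
include hsum

lemma mem_runPos_iff {k : ℕ} (hk : k ≤ r) (p : ℕ) :
    p ∈ runPos n ρ k ↔
      n + 1 ≤ p + ∑ j ∈ Finset.range (k + 1), ρ j ∧ p + ∑ j ∈ Finset.range k, ρ j ≤ n := by
  have h1 : ∑ j ∈ Finset.range (k + 1), ρ j ≤ n := hsum ▸ sum_range_mono ρ (by omega)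
  have h2 : ∑ j ∈ Finset.range k, ρ j ≤ ∑ j ∈ Finset.range (k + 1), ρ j :=
    sum_range_mono ρ (by omega)
  simp only [runPos, Finset.mem_Icc]
  omega

lemma runPos_subset {k : ℕ} (hk : k ≤ r) : runPos n ρ k ⊆ Finset.Icc 1 n := by
  intro p hp
  rw [mem_runPos_iff hsum hk] at hp
  have h1 : ∑ j ∈ Finset.range (k + 1), ρ j ≤ n := hsum ▸ sum_range_mono ρ (by omega)
  have h2 : ∑ j ∈ Finset.range k, ρ j ≤ ∑ j ∈ Finset.range (k + 1), ρ j :=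
    sum_range_mono ρ (by omega)
  rw [Finset.mem_Icc]
  omega

lemma card_runPos {k : ℕ} (hk : k ≤ r) : (runPos n ρ k).card = ρ k := by
  have h1 : ∑ j ∈ Finset.range (k + 1), ρ j ≤ n := hsum ▸ sum_range_mono ρ (by omega)
  have h2 : ∑ j ∈ Finset.range (k + 1), ρ j = ∑ j ∈ Finset.range k, ρ j + ρ k :=
    Finset.sum_range_succ ρ k
  rw [runPos, Nat.card_Icc]
  omega

lemma runIdxOf_eq {k : ℕ} (hk : k ≤ r) {p : ℕ} (hp : p ∈ runPos n ρ k) :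
    runIdxOf n r ρ p = k := by
  have hmem := hp
  rw [mem_runPos_iff hsum hk] at hmem
  have hpn : p ∈ Finset.Icc 1 n := runPos_subset hsum hk hp
  rw [Finset.mem_Icc] at hpn
  rw [runIdxOf]
  have hfe : (Finset.range (r + 1)).filter
      (fun m => ∑ j ∈ Finset.range (m + 1), ρ j ≤ n - p) = Finset.range k := by
    ext m
    simp only [Finset.mem_filter, Finset.mem_range]
    constructor
    · rintro ⟨hm, hle⟩
      by_contra hc
      push_neg at hc
      have hmono := sum_range_mono ρ (show k + 1 ≤ m + 1 by omega)
      omega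
    · intro hm
      have hmono := sum_range_mono ρ (show m + 1 ≤ k by omega)
      exact ⟨by omega, by omega⟩
  rw [hfe, Finset.card_range]

lemma exists_run {p : ℕ} (hp1 : 1 ≤ p) (hp2 : p ≤ n) :
    ∃ k, k ≤ r ∧ p ∈ runPos n ρ k := by
  have key : ∀ k, k ≤ r → n + 1 ≤ p + ∑ j ∈ Finset.range (k + 1), ρ j →
      ∃ k', k' ≤ r ∧ p ∈ runPos n ρ k' := by
    intro k
    induction k with
    | zero =>
      intro _ h0
      exact ⟨0, by omega, (mem_runPos_iff hsum (by omega) p).mpr ⟨h0, by simp; omega⟩⟩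
    | succ k ihk =>
      intro hk h
      by_cases hc : p + ∑ j ∈ Finset.range (k + 1), ρ j ≤ n
      · exact ⟨k + 1, hk, (mem_runPos_iff hsum hk p).mpr ⟨h, hc⟩⟩
      · exact ihk (by omega) (by omega)
  exact key r le_rfl (by omega)

lemma Icc_eq_biUnion : Finset.Icc 1 n = (Finset.range (r + 1)).biUnion (runPos n ρ) := by
  ext p
  simp only [Finset.mem_biUnion, Finset.mem_range, Finset.mem_Icc]
  constructor
  · rintro ⟨h1, h2⟩
    obtain ⟨k, hk, hmem⟩ := exists_run hsum h1 h2
    exact ⟨k, by omega, hmem⟩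
  · rintro ⟨k, hk, hmem⟩
    have := runPos_subset hsum (show k ≤ r by omega) hmem
    rw [Finset.mem_Icc] at this
    exact this

lemma runPos_disj {k k' : ℕ} (hk : k ≤ r) (hk' : k' ≤ r) (hne : k ≠ k') :
    Disjoint (runPos n ρ k) (runPos n ρ k') := by
  rw [Finset.disjoint_left]
  intro p hp hp'
  exact hne ((runIdxOf_eq hsum hk hp).symm.trans (runIdxOf_eq hsum hk' hp'))

lemma prod_Icc_runs {M : Type*} [CommMonoid M] (g : ℕ → M) :
    ∏ p ∈ Finset.Icc 1 n, g p = ∏ k ∈ Finset.range (r + 1), ∏ p ∈ runPos n ρ k, g p := by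
  rw [Icc_eq_biUnion hsum]
  exact Finset.prod_biUnion (fun k hk k' hk' hne =>
    runPos_disj hsum (Nat.lt_succ_iff.mp (Finset.mem_range.mp hk))
      (Nat.lt_succ_iff.mp (Finset.mem_range.mp hk')) hne)

end runs

lemma prod_count_ge {M : Type*} [CommMonoid M] (P : ℕ → M) (lo hi : ℕ) :
    ∏ p ∈ Finset.Icc lo hi, P (((Finset.Icc lo hi).filter (fun p' => p ≤ p')).card)
      = ∏ i ∈ Finset.range (hi + 1 - lo), P (i + 1) := by
  apply Finset.prod_bij' (i := fun p _ => hi - p) (j := fun i _ => hi - i)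
  · intro p hp
    rw [Finset.mem_Icc] at hp
    rw [Finset.mem_range]; omega
  · intro i hi'
    rw [Finset.mem_range] at hi'
    rw [Finset.mem_Icc]; omega
  · intro p hp
    rw [Finset.mem_Icc] at hp; omega
  · intro i hi'
    rw [Finset.mem_range] at hi'; omega
  · intro p hp
    rw [Finset.mem_Icc] at hp
    have hf : (Finset.Icc lo hi).filter (fun p' => p ≤ p') = Finset.Icc p hi := by
      ext a
      simp only [Finset.mem_filter, Finset.mem_Icc]
      omega
    rw [hf, Nat.card_Icc]
    congr 1
    omega

lemma step_lemma (n r : ℕ) (ρ τ τinv : ℕ → ℕ) (l' : ℕ) (hlr : l' + 1 ≤ r)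
    (hρpos : ∀ k, k ≤ r → 0 < ρ k)
    (hsum : ∑ k ∈ Finset.range (r + 1), ρ k = n)
    (hτmem : ∀ p, 1 ≤ p → p ≤ n → τ p ∈ Finset.Icc 1 n)
    (hinv : ∀ p, 1 ≤ p → p ≤ n → τinv (τ p) = p)
    (hinv' : ∀ c, 1 ≤ c → c ≤ n → τinv c ∈ Finset.Icc 1 n ∧ τ (τinv c) = c) :
    qP (ρ l') * ∏ c ∈ Finset.Icc 1 n, qP (sched n r ρ τ τinv (l' + 1) c)
      = qP (ρ (l' + 1)) * ∏ c ∈ Finset.Icc 1 n, qP (sched n r ρ τ τinv l' c) := by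
  have hτinj : ∀ p, p ∈ Finset.Icc 1 n → ∀ p', p' ∈ Finset.Icc 1 n → τ p = τ p' → p = p' := by
    intro p hp p' hp' h
    rw [Finset.mem_Icc] at hp hp'
    rw [← hinv p hp.1 hp.2, h, hinv p' hp'.1 hp'.2]
  -- reindex values to positions
  have hreindex : ∀ L : ℕ, ∏ c ∈ Finset.Icc 1 n, qP (sched n r ρ τ τinv L c)
      = ∏ p ∈ Finset.Icc 1 n, qP (sched n r ρ τ τinv L (τ p)) := by
    intro L
    refine Finset.prod_bij' (fun c _ => τinv c) (fun p _ => τ p) ?_ ?_ ?_ ?_ ?_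
    · intro c hc
      rw [Finset.mem_Icc] at hc
      exact (hinv' c hc.1 hc.2).1
    · intro p hp
      rw [Finset.mem_Icc] at hp
      exact hτmem p hp.1 hp.2
    · intro c hc
      rw [Finset.mem_Icc] at hc
      exact (hinv' c hc.1 hc.2).2
    · intro p hp
      rw [Finset.mem_Icc] at hp
      exact hinv p hp.1 hp.2
    · intro c hc
      rw [Finset.mem_Icc] at hc
      rw [(hinv' c hc.1 hc.2).2]
  -- unfolding sched on a run
  have hsched : ∀ L k, k ≤ r → ∀ p ∈ runPos n ρ k,
      sched n r ρ τ τinv L (τ p) =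
        if k < L then
          ((runPos n ρ k).filter (fun p' => τ p' < τ p)).card
            + ((runPos n ρ (k + 1)).filter (fun p' => τ p < τ p')).card
        else if k = L then ((runPos n ρ k).filter (fun p' => p ≤ p')).card
        else ((runPos n ρ k).filter (fun p' => τ p < τ p')).card
            + ((runPos n ρ (k - 1)).filter (fun p' => τ p' < τ p)).card := by
    intro L k hk p hp
    have hpIcc := runPos_subset hsum hk hp
    rw [Finset.mem_Icc] at hpIcc
    have h1 : τinv (τ p) = p := hinv p hpIcc.1 hpIcc.2
    have h2 : runIdxOf n r ρ p = k := runIdxOf_eq hsum hk hp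
    simp only [sched, h1, h2]
  have hinjOn : ∀ (s : Finset ℕ), s ⊆ Finset.Icc 1 n → Set.InjOn τ ↑s := by
    intro s hs a ha b hb hab
    exact hτinj a (hs (Finset.mem_coe.mp ha)) b (hs (Finset.mem_coe.mp hb)) hab
  have hVlt : ∀ k, k ≤ r → ∀ c, ((runPos n ρ k).filter (fun p' => τ p' < c)).card
      = (((runPos n ρ k).image τ).filter (fun x => x < c)).card := by
    intro k hk c
    rw [Finset.filter_image, Finset.card_image_of_injOn
      (Set.InjOn.mono (Finset.coe_subset.mpr (Finset.filter_subset _ _))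
        (hinjOn _ (runPos_subset hsum hk)))]
  have hVgt : ∀ k, k ≤ r → ∀ c, ((runPos n ρ k).filter (fun p' => c < τ p')).card
      = (((runPos n ρ k).image τ).filter (fun x => c < x)).card := by
    intro k hk c
    rw [Finset.filter_image, Finset.card_image_of_injOn
      (Set.InjOn.mono (Finset.coe_subset.mpr (Finset.filter_subset _ _))
        (hinjOn _ (runPos_subset hsum hk)))]
  have hprodV : ∀ k, k ≤ r → ∀ g : ℕ → Polynomial ℤ,
      ∏ x ∈ (runPos n ρ k).image τ, g x = ∏ p ∈ runPos n ρ k, g (τ p) := by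
    intro k hk g
    exact Finset.prod_image (fun x hx y hy =>
      hτinj x (runPos_subset hsum hk hx) y (runPos_subset hsum hk hy))
  have hcardV : ∀ k, k ≤ r → ((runPos n ρ k).image τ).card = ρ k := by
    intro k hk
    rw [Finset.card_image_of_injOn (hinjOn _ (runPos_subset hsum hk)), card_runPos hsum hk]
  set A := (runPos n ρ l').image τ with hA
  set B := (runPos n ρ (l' + 1)).image τ with hB
  have hcardA : A.card = ρ l' := hcardV l' (by omega)
  have hcardB : B.card = ρ (l' + 1) := hcardV (l' + 1) hlr
  have hdisj : Disjoint A B := by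
    rw [Finset.disjoint_left]
    intro x hx hx'
    obtain ⟨p, hp, hpe⟩ := Finset.mem_image.mp hx
    obtain ⟨p', hp', hpe'⟩ := Finset.mem_image.mp hx'
    have : p = p' := hτinj p (runPos_subset hsum (by omega) hp)
      p' (runPos_subset hsum hlr hp') (hpe.trans hpe'.symm)
    subst this
    have := runPos_disj hsum (show l' ≤ r by omega) hlr (by omega)
    exact (Finset.disjoint_left.mp this hp) hp'
  -- second-branch product over a run equals ∏ range (ρ k)
  have hrun_self : ∀ k, k ≤ r →
      ∏ p ∈ runPos n ρ k, qP (((runPos n ρ k).filter (fun p' => p ≤ p')).card)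
        = ∏ i ∈ Finset.range (ρ k), qP (i + 1) := by
    intro k hk
    have hc := card_runPos (n := n) (r := r) (ρ := ρ) hsum hk
    rw [runPos, Nat.card_Icc] at hc
    rw [runPos, prod_count_ge qP, hc]
  -- the four run products
  have hT1 : ∏ p ∈ runPos n ρ l', qP (sched n r ρ τ τinv (l' + 1) (τ p))
      = ∏ x ∈ A, qP ((A.filter (· < x)).card + (B.filter (x < ·)).card) := by
    rw [hprodV l' (by omega)]
    apply Finset.prod_congr rfl
    intro p hp
    rw [hsched (l' + 1) l' (by omega) p hp, if_pos (by omega),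
      hVlt l' (by omega) (τ p), hVgt (l' + 1) hlr (τ p)]
  have hT2 : ∏ p ∈ runPos n ρ (l' + 1), qP (sched n r ρ τ τinv (l' + 1) (τ p))
      = ∏ i ∈ Finset.range (ρ (l' + 1)), qP (i + 1) := by
    rw [← hrun_self (l' + 1) hlr]
    apply Finset.prod_congr rfl
    intro p hp
    rw [hsched (l' + 1) (l' + 1) hlr p hp, if_neg (by omega), if_pos rfl]
  have hT3 : ∏ p ∈ runPos n ρ l', qP (sched n r ρ τ τinv l' (τ p))
      = ∏ i ∈ Finset.range (ρ l'), qP (i + 1) := by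
    rw [← hrun_self l' (by omega)]
    apply Finset.prod_congr rfl
    intro p hp
    rw [hsched l' l' (by omega) p hp, if_neg (by omega), if_pos rfl]
  have hT4 : ∏ p ∈ runPos n ρ (l' + 1), qP (sched n r ρ τ τinv l' (τ p))
      = ∏ x ∈ B, qP ((A.filter (· < x)).card + (B.filter (x < ·)).card) := by
    rw [hprodV (l' + 1) hlr]
    apply Finset.prod_congr rfl
    intro p hp
    rw [hsched l' (l' + 1) hlr p hp, if_neg (by omega), if_neg (by omega)]
    have : l' + 1 - 1 = l' := by omega
    rw [this, hVlt l' (by omega) (τ p), hVgt (l' + 1) hlr (τ p), Nat.add_comm]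
  -- assemble
  have hmerge := merge_lemma qP (fun m hm => qP_ne_zero hm) A B hdisj
  rw [hcardA, hcardB] at hmerge
  rw [hreindex (l' + 1), hreindex l', prod_Icc_runs hsum, prod_Icc_runs hsum]
  have hl'mem : l' ∈ Finset.range (r + 1) := Finset.mem_range.mpr (by omega)
  have hl1mem : l' + 1 ∈ ((Finset.range (r + 1)).erase l') :=
    Finset.mem_erase.mpr ⟨by omega, Finset.mem_range.mpr (by omega)⟩
  have hsplit : ∀ g : ℕ → Polynomial ℤ, ∏ k ∈ Finset.range (r + 1), g k
      = g l' * (g (l' + 1) * ∏ k ∈ (((Finset.range (r + 1)).erase l').erase (l' + 1)), g k) := by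
    intro g
    rw [Finset.mul_prod_erase _ g hl1mem, Finset.mul_prod_erase _ g hl'mem]
  rw [hsplit, hsplit]
  have hrest : ∏ k ∈ (((Finset.range (r + 1)).erase l').erase (l' + 1)),
        ∏ p ∈ runPos n ρ k, qP (sched n r ρ τ τinv (l' + 1) (τ p))
      = ∏ k ∈ (((Finset.range (r + 1)).erase l').erase (l' + 1)),
        ∏ p ∈ runPos n ρ k, qP (sched n r ρ τ τinv l' (τ p)) := by
    apply Finset.prod_congr rfl
    intro k hk
    obtain ⟨hne1, hne0, hkr⟩ : k ≠ l' + 1 ∧ k ≠ l' ∧ k < r + 1 := by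
      rw [Finset.mem_erase, Finset.mem_erase, Finset.mem_range] at hk
      exact ⟨hk.1, hk.2.1, hk.2.2⟩
    apply Finset.prod_congr rfl
    intro p hp
    rw [hsched (l' + 1) k (by omega) p hp, hsched l' k (by omega) p hp]
    by_cases hk2 : k < l'
    · rw [if_pos (by omega), if_pos hk2]
    · rw [if_neg (by omega), if_neg (by omega), if_neg (by omega), if_neg (by omega)]
  rw [hrest, hT1, hT2, hT3, hT4]
  linear_combination (∏ k ∈ (((Finset.range (r + 1)).erase l').erase (l' + 1)),
    ∏ p ∈ runPos n ρ k, qP (sched n r ρ τ τinv l' (τ p))) * hmerge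

/-- For a permutation `τ ∈ S_n` with runs of lengths `ρ r, …, ρ 0`
and `1 ≤ l ≤ r`, in `ℤ[q]`:
`[ρ 0]_q · Π_{c=1}^{n} [w^{(l)}(c)]_q = [ρ l]_q · Π_{c=1}^{n} [w^{(0)}(c)]_q`. -/
theorem stmt_10 (n r : ℕ) (ρ τ τinv : ℕ → ℕ) (l : ℕ) (hl : 1 ≤ l) (hlr : l ≤ r)
    (hρpos : ∀ k, k ≤ r → 0 < ρ k)
    (hsum : ∑ k ∈ Finset.range (r + 1), ρ k = n)
    (hτmem : ∀ p, 1 ≤ p → p ≤ n → τ p ∈ Finset.Icc 1 n)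
    (hinv : ∀ p, 1 ≤ p → p ≤ n → τinv (τ p) = p)
    (hinv' : ∀ c, 1 ≤ c → c ≤ n → τinv c ∈ Finset.Icc 1 n ∧ τ (τinv c) = c)
    (hincr : ∀ p, 1 ≤ p → p + 1 ≤ n →
        runIdxOf n r ρ p = runIdxOf n r ρ (p + 1) → τ p < τ (p + 1))
    (hdesc : ∀ p, 1 ≤ p → p + 1 ≤ n →
        runIdxOf n r ρ p ≠ runIdxOf n r ρ (p + 1) → τ (p + 1) < τ p)
    :
    (∑ i ∈ Finset.range (ρ 0), (Polynomial.X : Polynomial ℤ) ^ i)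
        * ∏ c ∈ Finset.Icc 1 n,
            ∑ i ∈ Finset.range (sched n r ρ τ τinv l c), (Polynomial.X : Polynomial ℤ) ^ i
      = (∑ i ∈ Finset.range (ρ l), (Polynomial.X : Polynomial ℤ) ^ i)
          * ∏ c ∈ Finset.Icc 1 n,
              ∑ i ∈ Finset.range (sched n r ρ τ τinv 0 c), (Polynomial.X : Polynomial ℤ) ^ i := by
  show qP (ρ 0) * ∏ c ∈ Finset.Icc 1 n, qP (sched n r ρ τ τinv l c)
      = qP (ρ l) * ∏ c ∈ Finset.Icc 1 n, qP (sched n r ρ τ τinv 0 c)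
  clear hincr hdesc
  revert hlr
  induction l, hl using Nat.le_induction with
  | base =>
    intro hlr
    exact step_lemma n r ρ τ τinv 0 hlr hρpos hsum hτmem hinv hinv'
  | succ l hl1 ih =>
    intro hlr
    have hih := ih (by omega)
    have hstep := step_lemma n r ρ τ τinv l hlr hρpos hsum hτmem hinv hinv'
    have hcan : qP (ρ l) ≠ 0 := qP_ne_zero (hρpos l (by omega))
    apply mul_left_cancel₀ hcan
    linear_combination qP (ρ 0) * hstep + qP (ρ (l + 1)) * hih
end

section
/- With E_{n,k} defined by e_n[X(1−z)/(1−q)] = Σ_{k=1}^n ((z;q)_k/(q;q)_k) E_{n,k}[X], one has the identity (−1)^{n−1} p_n = Σ_{k=1}^{n} ([n]_q/[k]_q) E_{n,k} in the ring of symmetric functions over ℚ(q), where p_n is the n-th power sum symmetric function and [m]_q = (1−q^m)/(1−q). -/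
open MvPolynomial

/-- The elementary symmetric function `e_n`, expressed in the ring of symmetric
functions over `K`, realized as the polynomial ring `K[p_1, p_2, …]` in the power
sums (`X i` stands for `p_{i+1}`), via Newton's identity
`e_n = (1/n) Σ_{i=0}^{n-1} (−1)^i p_{i+1} e_{n−1−i}`. -/
noncomputable def eP (K : Type*) [Field K] : ℕ → MvPolynomial ℕ K := fun n =>
  Nat.strongRecOn n (fun n ih =>
    if h : n = 0 then 1
    else C ((n : K))⁻¹ * ∑ i ∈ Finset.range n,
      (-1 : MvPolynomial ℕ K) ^ i * (X i * ih (n - 1 - i) (by omega)))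

namespace Stmt16Aux
noncomputable section

theorem eP_def (K : Type*) [Field K] (n : ℕ) : eP K n =
    if n = 0 then 1
    else C ((n : K))⁻¹ * ∑ i ∈ Finset.range n,
      (-1 : MvPolynomial ℕ K) ^ i * (X i * eP K (n - 1 - i)) := by
  rw [show eP K n = _ from Nat.strongRecOn_eq _ n]
  split <;> rfl

theorem eP_zero (K : Type*) [Field K] : eP K 0 = 1 := by rw [eP_def]; simp

/-- `1 - X^m ≠ 0` in `RatFunc L` for `m ≥ 1`. -/
theorem one_sub_X_pow_ne_zero (L : Type*) [Field L] {m : ℕ} (hm : 1 ≤ m) :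
    (1 : RatFunc L) - RatFunc.X ^ m ≠ 0 := by
  intro h
  have hx : (RatFunc.X : RatFunc L) ^ m = 1 := by linear_combination -h
  have := RatFunc.algebraMap_injective L
    (by rw [map_pow, RatFunc.algebraMap_X, map_one]; exact hx :
      algebraMap (Polynomial L) (RatFunc L) (Polynomial.X ^ m) = algebraMap _ _ 1)
  have := congrArg Polynomial.natDegree this
  simp at this
  omega

abbrev K₀ : Type := RatFunc ℚ
abbrev F₀ : Type := RatFunc K₀

def qK : K₀ := RatFunc.X
def zF : F₀ := RatFunc.X
def qF : F₀ := RatFunc.C qK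

/-- the inclusion of polynomials in `z` into rational functions in `z`. -/
def φ : Polynomial K₀ →+* F₀ := algebraMap (Polynomial K₀) F₀
/-- evaluation at `z = 1`. -/
def ψ : Polynomial K₀ →+* K₀ := Polynomial.evalRingHom 1

theorem φ_X : φ Polynomial.X = zF := RatFunc.algebraMap_X
theorem φ_C (a : K₀) : φ (Polynomial.C a) = RatFunc.C a := RatFunc.algebraMap_C a
theorem ψ_C (a : K₀) : ψ (Polynomial.C a) = a := Polynomial.eval_C
theorem ψ_X : ψ Polynomial.X = 1 := Polynomial.eval_X

theorem hq_ne {m : ℕ} (hm : 1 ≤ m) : (1 : K₀) - qK ^ m ≠ 0 := one_sub_X_pow_ne_zero ℚ hm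
theorem hz_ne : (1 : F₀) - zF ≠ 0 := by
  simpa [zF] using one_sub_X_pow_ne_zero K₀ (le_refl 1)

/-- the "divided" coefficient `d m = (1 + z + ⋯ + z^{m-1})/(1-q^m)` as a polynomial in z. -/
def d (m : ℕ) : Polynomial K₀ :=
  (∑ j ∈ Finset.range m, Polynomial.X ^ j) * Polynomial.C ((1 - qK ^ m)⁻¹)

theorem c_eq (m : ℕ) : (1 - zF ^ m) / (1 - qF ^ m) = (1 - zF) * φ (d m) := by
  have h1 : (1 : F₀) - qF ^ m = RatFunc.C (1 - qK ^ m) := by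
    simp [qF]
  rw [h1, d, map_mul, map_sum]
  simp only [map_pow, φ_X, φ_C, map_inv₀]
  have h2 : (1 - zF) * (∑ j ∈ Finset.range m, zF ^ j) = 1 - zF ^ m := by
    have := geom_sum_mul zF m
    linear_combination -this
  rw [div_eq_mul_inv, ← h2]
  ring

theorem ψ_d (m : ℕ) : ψ (d m) = (m : K₀) * (1 - qK ^ m)⁻¹ := by
  rw [d, map_mul, map_sum, ψ_C]
  simp [ψ, Polynomial.eval_pow]


/-- the plethystic substitution `p_m ↦ p_m (1-z^m)/(1-q^m)`. -/
def sb : ℕ → MvPolynomial ℕ F₀ := fun m => C ((1 - zF ^ (m + 1)) / (1 - qF ^ (m + 1))) * X m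

theorem main : ∀ n, 1 ≤ n → ∃ P : MvPolynomial ℕ (Polynomial K₀),
    aeval sb (eP F₀ n) = C (1 - zF) * map φ P ∧
    map ψ P = C ((-1 : K₀) ^ (n - 1) * (1 - qK ^ n)⁻¹) * X (n - 1) := by
  intro n
  induction n using Nat.strong_induction_on with
  | _ n IH =>
    intro hn
    have hn0 : n ≠ 0 := by omega
    have hQ : ∀ i, ∃ Q : MvPolynomial ℕ (Polynomial K₀), i < n →
        (aeval sb (eP F₀ (n - 1 - i)) = map φ Q ∧
         map ψ Q = if i = n - 1 then 1 else 0) := by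
      intro i
      by_cases hi : i < n
      · by_cases hi' : i = n - 1
        · refine ⟨1, fun _ => ⟨?_, ?_⟩⟩
          · have : n - 1 - i = 0 := by omega
            rw [this, eP_zero, map_one, map_one]
          · rw [map_one, if_pos hi']
        · obtain ⟨P', h1, h2⟩ := IH (n - 1 - i) (by omega) (by omega)
          refine ⟨C (1 - Polynomial.X) * P', fun _ => ⟨?_, ?_⟩⟩
          · have hx : φ (1 - Polynomial.X) = 1 - zF := by rw [map_sub, map_one, φ_X]
            rw [h1, map_mul, map_C, hx]
          · rw [map_mul, map_C, map_sub, map_one, ψ_X, sub_self, C_0, zero_mul, if_neg hi']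
      · exact ⟨0, fun h => absurd h hi⟩
    choose Q hQ using hQ
    refine ⟨C (Polynomial.C ((n : K₀))⁻¹) * ∑ i ∈ Finset.range n,
        (-1) ^ i * (C (d (i + 1)) * X i * Q i), ?_, ?_⟩
    · rw [eP_def, if_neg hn0]
      simp only [map_mul, map_sum, map_pow, map_neg, map_one, aeval_X, aeval_C,
        MvPolynomial.algebraMap_eq, map_C]
      have hc : φ (Polynomial.C ((n : K₀))⁻¹) = ((n : F₀))⁻¹ := by
        rw [φ_C, map_inv₀, map_natCast]
      rw [hc]
      have hterm : ∀ i ∈ Finset.range n,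
          (-1 : MvPolynomial ℕ F₀) ^ i * (sb i * aeval sb (eP F₀ (n - 1 - i)))
            = C (1 - zF) * ((-1) ^ i * (C (φ (d (i + 1))) * X i * map φ (Q i))) := by
        intro i hi
        have hi' : i < n := Finset.mem_range.mp hi
        rw [(hQ i hi').1, sb, c_eq (i + 1), C_mul]
        ring
      rw [Finset.sum_congr rfl hterm, ← Finset.mul_sum]
      simp only [map_X]
      ring
    · simp only [map_mul, map_sum, map_pow, map_neg, map_one, map_X, map_C]
      rw [Finset.sum_eq_single_of_mem (n - 1) (Finset.mem_range.mpr (by omega))]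
      · rw [(hQ (n - 1) (by omega)).2, if_pos rfl, mul_one,
          show n - 1 + 1 = n by omega, ψ_d, ψ_C]
        have hC : ((-1 : MvPolynomial ℕ K₀)) ^ (n - 1) = C ((-1 : K₀) ^ (n - 1)) := by
          rw [map_pow, map_neg, map_one]
        have : CharZero K₀ := charZero_of_injective_algebraMap (algebraMap ℚ K₀).injective
        have hnne : (n : K₀) ≠ 0 := Nat.cast_ne_zero.mpr hn0
        have key : (n : K₀)⁻¹ * (-1 : K₀) ^ (n - 1) * ((n : K₀) * (1 - qK ^ n)⁻¹)
            = (-1 : K₀) ^ (n - 1) * (1 - qK ^ n)⁻¹ := by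
          field_simp
        clear key
        simp only [hC, ← C_mul, ← mul_assoc]
        congr 1
        apply congrArg
        field_simp
      · intro i hi hne
        rw [(hQ i (Finset.mem_range.mp hi)).2, if_neg hne, mul_zero, mul_zero]

/-- `(z;q)_k/((1-z)(q;q)_k)` as a polynomial in `z`. -/
def g (k : ℕ) : Polynomial K₀ :=
  (∏ i ∈ Finset.range (k - 1), (1 - Polynomial.X * Polynomial.C (qK ^ (i + 1)))) *
    Polynomial.C ((∏ i ∈ Finset.range k, (1 - qK ^ (i + 1)))⁻¹)

theorem Pz_div_Pq {k : ℕ} (hk : 1 ≤ k) :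
    (∏ i ∈ Finset.range k, (1 - zF * qF ^ i)) / (∏ i ∈ Finset.range k, (1 - qF * qF ^ i))
      = (1 - zF) * φ (g k) := by
  have hPq : (∏ i ∈ Finset.range k, (1 - qF * qF ^ i))
      = RatFunc.C (∏ i ∈ Finset.range k, (1 - qK ^ (i + 1))) := by
    rw [map_prod]
    refine Finset.prod_congr rfl fun i _ => ?_
    simp [qF, pow_succ]
    ring
  have hPz : (∏ i ∈ Finset.range k, (1 - zF * qF ^ i))
      = (∏ i ∈ Finset.range (k - 1), (1 - zF * qF ^ (i + 1))) * (1 - zF) := by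
    conv_lhs => rw [show k = (k - 1) + 1 by omega]
    rw [Finset.prod_range_succ']
    simp
  have hφg : φ (g k) = (∏ i ∈ Finset.range (k - 1), (1 - zF * qF ^ (i + 1)))
      * (RatFunc.C (∏ i ∈ Finset.range k, (1 - qK ^ (i + 1))))⁻¹ := by
    rw [g, map_mul, map_prod, φ_C, map_inv₀]
    congr 1
    refine Finset.prod_congr rfl fun i _ => ?_
    rw [map_sub, map_one, map_mul, φ_X, φ_C]
    congr 1
    simp [qF, pow_succ]
  rw [hPz, hPq, hφg, div_eq_mul_inv]
  ring

theorem ψ_g {k : ℕ} (hk : 1 ≤ k) : ψ (g k) = (1 - qK ^ k)⁻¹ := by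
  have hA : ψ (∏ i ∈ Finset.range (k - 1), (1 - Polynomial.X * Polynomial.C (qK ^ (i + 1))))
      = ∏ i ∈ Finset.range (k - 1), (1 - qK ^ (i + 1)) := by
    rw [map_prod]
    refine Finset.prod_congr rfl fun i _ => ?_
    simp [ψ]
  rw [g, map_mul, hA, ψ_C]
  have hsplit : (∏ i ∈ Finset.range k, (1 - qK ^ (i + 1)))
      = (∏ i ∈ Finset.range (k - 1), (1 - qK ^ (i + 1))) * (1 - qK ^ k) := by
    conv_lhs => rw [show k = (k - 1) + 1 by omega]
    rw [Finset.prod_range_succ, show k - 1 + 1 = k by omega]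
  have hAne : (∏ i ∈ Finset.range (k - 1), (1 - qK ^ (i + 1))) ≠ 0 :=
    Finset.prod_ne_zero_iff.mpr fun i _ => hq_ne (by omega)
  have hkne : (1 : K₀) - qK ^ k ≠ 0 := hq_ne hk
  rw [hsplit, mul_inv]
  rw [← mul_assoc, mul_inv_cancel₀ hAne, one_mul]

theorem map_ψ_C_map (p : MvPolynomial ℕ K₀) :
    map ψ (map (Polynomial.C : K₀ →+* Polynomial K₀) p) = p := by
  rw [map_map, show ψ.comp (Polynomial.C : K₀ →+* Polynomial K₀) = RingHom.id K₀ from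
    RingHom.ext fun a => ψ_C a, map_id]

end
end Stmt16Aux


open Stmt16Aux

/-- Garsia–Haglund identity. In the ring of symmetric functions
over `K = ℚ(q)`, realized as `K[p_1, p_2, …]` (`X i` is the power sum `p_{i+1}`), if
`E 1, …, E n` satisfy the defining expansion
`e_n[X(1−z)/(1−q)] = Σ_{k=1}^{n} ((z;q)_k/(q;q)_k) E k` in `ℚ(q)(z)[p_1, p_2, …]`,
then `(−1)^(n−1) p_n = Σ_{k=1}^{n} ([n]_q/[k]_q) E k`. -/
theorem stmt_16 (n : ℕ) (hn : 1 ≤ n)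
    (E : ℕ → MvPolynomial ℕ (RatFunc ℚ))
    (hE : letI K := RatFunc ℚ
      letI F := RatFunc K
      letI q : F := algebraMap K F RatFunc.X
      letI z : F := RatFunc.X
      aeval (fun m => (C ((1 - z ^ (m + 1)) / (1 - q ^ (m + 1))) * X m : MvPolynomial ℕ F))
          (eP F n)
        = ∑ k ∈ Finset.Icc 1 n,
            C ((∏ i ∈ Finset.range k, (1 - z * q ^ i))
                / (∏ i ∈ Finset.range k, (1 - q * q ^ i)))
              * (E k).map (algebraMap K F)) :
    (-1 : MvPolynomial ℕ (RatFunc ℚ)) ^ (n - 1) * X (n - 1)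
      = ∑ k ∈ Finset.Icc 1 n,
          C ((∑ i ∈ Finset.range n, (RatFunc.X : RatFunc ℚ) ^ i)
              / (∑ i ∈ Finset.range k, (RatFunc.X : RatFunc ℚ) ^ i))
            * E k := by

  classical
  obtain ⟨P, h1, h2⟩ := main n hn
  have hE' : aeval sb (eP F₀ n) = ∑ k ∈ Finset.Icc 1 n,
      C ((∏ i ∈ Finset.range k, (1 - zF * qF ^ i))
          / (∏ i ∈ Finset.range k, (1 - qF * qF ^ i)))
        * (E k).map (RatFunc.C : K₀ →+* F₀) := by
    have := hE
    simp only [RatFunc.algebraMap_eq_C] at this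
    exact this
  rw [h1] at hE'
  have hterm : ∀ k ∈ Finset.Icc 1 n,
      (C ((∏ i ∈ Finset.range k, (1 - zF * qF ^ i))
          / (∏ i ∈ Finset.range k, (1 - qF * qF ^ i)))
        * (E k).map (RatFunc.C : K₀ →+* F₀) : MvPolynomial ℕ F₀)
      = C (1 - zF) * map φ (C (g k) * map (Polynomial.C : K₀ →+* Polynomial K₀) (E k)) := by
    intro k hk
    obtain ⟨hk1, -⟩ := Finset.mem_Icc.mp hk
    rw [Pz_div_Pq hk1, C_mul]
    conv_rhs => rw [map_mul, map_C, map_map]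
    rw [show φ.comp (Polynomial.C : K₀ →+* Polynomial K₀) = (RatFunc.C : K₀ →+* F₀)
        from RingHom.ext fun a => φ_C a]
    ring
  rw [Finset.sum_congr rfl hterm, ← Finset.mul_sum, ← map_sum] at hE'
  have hCz : (C (1 - zF) : MvPolynomial ℕ F₀) ≠ 0 := fun h =>
    hz_ne (MvPolynomial.C_injective ℕ F₀ (h.trans (map_zero C).symm))
  have hPP : P = ∑ k ∈ Finset.Icc 1 n,
      C (g k) * map (Polynomial.C : K₀ →+* Polynomial K₀) (E k) :=
    MvPolynomial.map_injective φ (RatFunc.algebraMap_injective K₀)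
      (mul_left_cancel₀ hCz hE')
  have h4 : C ((-1 : K₀) ^ (n - 1) * (1 - qK ^ n)⁻¹) * X (n - 1)
      = ∑ k ∈ Finset.Icc 1 n, C ((1 - qK ^ k)⁻¹) * E k := by
    rw [← h2, hPP, map_sum]
    refine Finset.sum_congr rfl fun k hk => ?_
    obtain ⟨hk1, -⟩ := Finset.mem_Icc.mp hk
    rw [map_mul, map_C, ψ_g hk1, map_ψ_C_map]
  have hq1 : qK ≠ 1 := fun h => hq_ne (le_refl 1) (by rw [h]; simp)
  have hqn : (1 : K₀) - qK ^ n ≠ 0 := hq_ne hn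
  have hcoef : ∀ k ∈ Finset.Icc 1 n,
      (∑ i ∈ Finset.range n, qK ^ i) / (∑ i ∈ Finset.range k, qK ^ i)
        = (1 - qK ^ n) * (1 - qK ^ k)⁻¹ := by
    intro k hk
    obtain ⟨hk1, -⟩ := Finset.mem_Icc.mp hk
    rw [geom_sum_eq hq1, geom_sum_eq hq1]
    have ha : qK - 1 ≠ 0 := sub_ne_zero.mpr hq1
    have hb : qK ^ k - 1 ≠ 0 := fun h => hq_ne hk1 (by linear_combination -h)
    have hc : (1 : K₀) - qK ^ k ≠ 0 := hq_ne hk1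
    field_simp
    ring
  show (-1 : MvPolynomial ℕ K₀) ^ (n - 1) * X (n - 1)
      = ∑ k ∈ Finset.Icc 1 n,
          C ((∑ i ∈ Finset.range n, qK ^ i) / (∑ i ∈ Finset.range k, qK ^ i)) * E k
  rw [Finset.sum_congr rfl fun k hk => by rw [hcoef k hk]]
  have hC1 : ((-1 : MvPolynomial ℕ K₀)) ^ (n - 1) = C ((-1 : K₀) ^ (n - 1)) := by
    rw [map_pow, map_neg, map_one]
  have hkey : (1 - qK ^ n) * ((-1 : K₀) ^ (n - 1) * (1 - qK ^ n)⁻¹) = (-1) ^ (n - 1) := by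
    field_simp
  calc (-1 : MvPolynomial ℕ K₀) ^ (n - 1) * X (n - 1)
      = C (1 - qK ^ n) * (C ((-1 : K₀) ^ (n - 1) * (1 - qK ^ n)⁻¹) * X (n - 1)) := by
        rw [hC1, ← mul_assoc, ← C_mul, hkey]
    _ = C (1 - qK ^ n) * ∑ k ∈ Finset.Icc 1 n, C ((1 - qK ^ k)⁻¹) * E k := by rw [h4]
    _ = ∑ k ∈ Finset.Icc 1 n, C ((1 - qK ^ n) * (1 - qK ^ k)⁻¹) * E k := by
        rw [Finset.mul_sum]
        exact Finset.sum_congr rfl fun k _ => by rw [← mul_assoc, ← C_mul]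
end
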